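/- arXiv:2309.08920 — 8 statements merged into one kernel-verified Lean document; each statement's English description precedes it below -/
import Mathlib

section
/- For any vector x in F_q^n and any 1 ≤ b ≤ n, the b-symbol weight of x equals the Hamming weight of x plus the sum over all holes H of the Hamming support of x of min(|H|, b−1); i.e., w_b(x) = w_1(x) + Σ_{H hole, |H|≤b−1} |H| + Σ_{H hole, |H|≥b} (b−1). -/
open scoped Classical
open Finset

noncomputable def bwt {F : Type*} [Field F] (n b : ℕ) [NeZero n] (x : ZMod n → F) : ℕ :=
  (Finset.univ.filter (fun i : ZMod n => ∃ j < b, x (i + (j : ZMod n)) ≠ 0)).card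

noncomputable def bDist {F : Type*} [Field F] (n b : ℕ) [NeZero n]
    (C : Set (ZMod n → F)) : ℕ :=
  sInf {w | ∃ u ∈ C, ∃ v ∈ C, u ≠ v ∧ bwt n b (u - v) = w}

def IsHole {n : ℕ} [NeZero n] (J H : Finset (ZMod n)) : Prop :=
  ∃ (a : ZMod n) (h : ℕ), 0 < h ∧
    H = Finset.image (fun t : ℕ => a + (t : ZMod n) + 1) (Finset.range h) ∧
    (∀ x ∈ H, x ∉ J) ∧ a ∈ J ∧ a + (h : ZMod n) + 1 ∈ J

noncomputable def hSupp {F : Type*} [Field F] {n : ℕ} [NeZero n] (x : ZMod n → F) :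
    Finset (ZMod n) :=
  Finset.univ.filter (fun i => x i ≠ 0)


open scoped Classical
open Finset

section AuxHoles

variable {n : ℕ} [NeZero n]

private lemma natCast_inj_of_lt {s t : ℕ} (hs : s < n) (ht : t < n)
    (h : (s : ZMod n) = (t : ZMod n)) : s = t := by
  have h1 : ((s : ZMod n)).val = s := ZMod.val_natCast_of_lt hs
  have h2 : ((t : ZMod n)).val = t := ZMod.val_natCast_of_lt ht
  rw [h] at h1
  omega

variable {J : Finset (ZMod n)}

private lemma dExists (hJ : J.Nonempty) (i : ZMod n) :
    ∃ t : ℕ, i + (((t + 1 : ℕ)) : ZMod n) ∈ J := by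
  obtain ⟨s, hs⟩ := hJ
  refine ⟨(s - i - 1).val, ?_⟩
  have h1 : (((s - i - 1).val + 1 : ℕ) : ZMod n) = s - i := by
    push_cast [ZMod.natCast_val, ZMod.cast_id]
    ring
  rw [h1]
  have h2 : i + (s - i) = s := by ring
  rw [h2]; exact hs

noncomputable def dd (hJ : J.Nonempty) (i : ZMod n) : ℕ := Nat.find (dExists hJ i) + 1

lemma dd_pos (hJ : J.Nonempty) (i : ZMod n) : 0 < dd hJ i := Nat.succ_pos _

lemma dd_spec (hJ : J.Nonempty) (i : ZMod n) : i + ((dd hJ i : ℕ) : ZMod n) ∈ J := by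
  have := Nat.find_spec (dExists hJ i)
  simpa [dd] using this

lemma dd_min (hJ : J.Nonempty) {i : ZMod n} {t : ℕ} (h0 : 0 < t) (ht : t < dd hJ i) :
    i + (t : ZMod n) ∉ J := by
  obtain ⟨t', rfl⟩ : ∃ t', t = t' + 1 := ⟨t - 1, by omega⟩
  have := Nat.find_min (dExists hJ i) (show t' < Nat.find (dExists hJ i) by
    simp only [dd] at ht; omega)
  simpa using this

lemma dd_le (hJ : J.Nonempty) (i : ZMod n) : dd hJ i ≤ n := by
  obtain ⟨s, hs⟩ := id hJ
  have hw : i + ((((s - i - 1).val + 1 : ℕ)) : ZMod n) ∈ J := by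
    have h1 : (((s - i - 1).val + 1 : ℕ) : ZMod n) = s - i := by
      push_cast [ZMod.natCast_val, ZMod.cast_id]
      ring
    rw [h1]
    have h2 : i + (s - i) = s := by ring
    rw [h2]; exact hs
  have := Nat.find_min' (dExists hJ i) hw
  have hv : (s - i - 1).val < n := ZMod.val_lt _
  simp only [dd]; omega

lemma dd_eq (hJ : J.Nonempty) {i : ZMod n} {k : ℕ} (hk : 0 < k)
    (hmem : i + (k : ZMod n) ∈ J)
    (hmin : ∀ s : ℕ, 0 < s → s < k → i + (s : ZMod n) ∉ J) : dd hJ i = k := by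
  refine le_antisymm ?_ ?_
  · have : Nat.find (dExists hJ i) ≤ k - 1 := Nat.find_le (by
      have : (k - 1) + 1 = k := by omega
      rw [this]; exact hmem)
    simp only [dd]; omega
  · by_contra h
    push_neg at h
    exact hmin _ (dd_pos hJ i) h (dd_spec hJ i)

/- backward distance -/
private lemma gExists (hJ : J.Nonempty) (i : ZMod n) :
    ∃ t : ℕ, i - (((t + 1 : ℕ)) : ZMod n) ∈ J := by
  obtain ⟨s, hs⟩ := hJ
  refine ⟨(i - s - 1).val, ?_⟩
  have h1 : (((i - s - 1).val + 1 : ℕ) : ZMod n) = i - s := by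
    push_cast [ZMod.natCast_val, ZMod.cast_id]
    ring
  rw [h1]
  have h2 : i - (i - s) = s := by ring
  rw [h2]; exact hs

noncomputable def gg (hJ : J.Nonempty) (i : ZMod n) : ℕ := Nat.find (gExists hJ i) + 1

lemma gg_pos (hJ : J.Nonempty) (i : ZMod n) : 0 < gg hJ i := Nat.succ_pos _

lemma gg_spec (hJ : J.Nonempty) (i : ZMod n) : i - ((gg hJ i : ℕ) : ZMod n) ∈ J := by
  have := Nat.find_spec (gExists hJ i)
  simpa [gg] using this

lemma gg_min (hJ : J.Nonempty) {i : ZMod n} {t : ℕ} (h0 : 0 < t) (ht : t < gg hJ i) :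
    i - (t : ZMod n) ∉ J := by
  obtain ⟨t', rfl⟩ : ∃ t', t = t' + 1 := ⟨t - 1, by omega⟩
  have := Nat.find_min (gExists hJ i) (show t' < Nat.find (gExists hJ i) by
    simp only [gg] at ht; omega)
  simpa using this

lemma gg_eq (hJ : J.Nonempty) {i : ZMod n} {k : ℕ} (hk : 0 < k)
    (hmem : i - (k : ZMod n) ∈ J)
    (hmin : ∀ s : ℕ, 0 < s → s < k → i - (s : ZMod n) ∉ J) : gg hJ i = k := by
  refine le_antisymm ?_ ?_
  · have : Nat.find (gExists hJ i) ≤ k - 1 := Nat.find_le (by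
      have : (k - 1) + 1 = k := by omega
      rw [this]; exact hmem)
    simp only [gg]; omega
  · by_contra h
    push_neg at h
    exact hmin _ (gg_pos hJ i) h (gg_spec hJ i)

noncomputable def holeOf (hJ : J.Nonempty) (a : ZMod n) : Finset (ZMod n) :=
  Finset.image (fun t : ℕ => a + (t : ZMod n) + 1) (Finset.range (dd hJ (a + 1)))

lemma mem_holeOf {hJ : J.Nonempty} {a i : ZMod n} :
    i ∈ holeOf hJ a ↔ ∃ t : ℕ, t < dd hJ (a + 1) ∧ a + (t : ZMod n) + 1 = i := by
  simp [holeOf, Finset.mem_image, Finset.mem_range]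

lemma holeOf_not_mem (hJ : J.Nonempty) {a : ZMod n} (ha1 : a + 1 ∉ J)
    {i : ZMod n} (hi : i ∈ holeOf hJ a) : i ∉ J := by
  obtain ⟨t, ht, rfl⟩ := mem_holeOf.mp hi
  rcases Nat.eq_zero_or_pos t with rfl | h0
  · simpa using ha1
  · have he : a + (t : ZMod n) + 1 = (a + 1) + (t : ZMod n) := by ring
    rw [he]
    exact dd_min hJ h0 ht

lemma card_holeOf (hJ : J.Nonempty) (a : ZMod n) :
    (holeOf hJ a).card = dd hJ (a + 1) := by
  rw [holeOf, Finset.card_image_of_injOn, Finset.card_range]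
  intro s hs t ht h
  simp only [Finset.coe_range, Set.mem_Iio] at hs ht
  have hc : (s : ZMod n) = (t : ZMod n) := by
    have := h
    simpa [add_left_cancel_iff, add_right_cancel_iff] using this
  exact natCast_inj_of_lt (lt_of_lt_of_le hs (dd_le hJ _)) (lt_of_lt_of_le ht (dd_le hJ _)) hc

lemma dd_holeOf (hJ : J.Nonempty) {a : ZMod n} (ha1 : a + 1 ∉ J) {t : ℕ}
    (ht : t < dd hJ (a + 1)) :
    dd hJ (a + (t : ZMod n) + 1) = dd hJ (a + 1) - t := by
  refine dd_eq hJ (by omega) ?_ ?_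
  · have he : a + (t : ZMod n) + 1 + ((dd hJ (a + 1) - t : ℕ) : ZMod n)
        = (a + 1) + ((dd hJ (a + 1) : ℕ) : ZMod n) := by
      rw [Nat.cast_sub ht.le]; ring
    rw [he]
    exact dd_spec hJ _
  · intro s hs0 hs
    have he : a + (t : ZMod n) + 1 + (s : ZMod n) = (a + 1) + ((t + s : ℕ) : ZMod n) := by
      push_cast; ring
    rw [he]
    exact dd_min hJ (by omega) (by omega)

lemma mem_hole_of_not_mem (hJ : J.Nonempty) {i : ZMod n} (hi : i ∉ J) :
    ∃ a : ZMod n, a ∈ J ∧ a + 1 ∉ J ∧ i ∈ holeOf hJ a := by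
  set k := gg hJ i with hk
  have hk1 : 1 ≤ k := gg_pos hJ i
  set a := i - ((k : ℕ) : ZMod n) with ha
  have haJ : a ∈ J := gg_spec hJ i
  have key : ∀ s : ℕ, s < k → i - (s : ZMod n) ∉ J := by
    intro s hs
    rcases Nat.eq_zero_or_pos s with rfl | h0
    · simpa using hi
    · exact gg_min hJ h0 hs
  have ha1 : a + 1 ∉ J := by
    have he : a + 1 = i - ((k - 1 : ℕ) : ZMod n) := by
      rw [Nat.cast_sub hk1, ha]; push_cast; ring
    rw [he]
    exact key (k - 1) (by omega)
  refine ⟨a, haJ, ha1, ?_⟩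
  have hdk : k ≤ dd hJ (a + 1) := by
    by_contra h
    push_neg at h
    have hmem := dd_spec hJ (a + 1)
    have he : (a + 1) + ((dd hJ (a + 1) : ℕ) : ZMod n)
        = i - ((k - 1 - dd hJ (a + 1) : ℕ) : ZMod n) := by
      rw [Nat.cast_sub (by omega : dd hJ (a+1) ≤ k - 1), Nat.cast_sub (by omega : 1 ≤ k), ha]
      push_cast; ring
    rw [he] at hmem
    exact key _ (by omega) hmem
  rw [mem_holeOf]
  refine ⟨k - 1, by omega, ?_⟩
  rw [Nat.cast_sub hk1, ha]; push_cast; ring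

lemma eq_of_mem_holeOf (hJ : J.Nonempty) {a i : ZMod n} (ha : a ∈ J) (ha1 : a + 1 ∉ J)
    (hi : i ∈ holeOf hJ a) : a = i - ((gg hJ i : ℕ) : ZMod n) := by
  obtain ⟨t, ht, rfl⟩ := mem_holeOf.mp hi
  have hg : gg hJ (a + (t : ZMod n) + 1) = t + 1 := by
    refine gg_eq hJ (by omega) ?_ ?_
    · have he : a + (t : ZMod n) + 1 - (((t + 1 : ℕ)) : ZMod n) = a := by push_cast; ring
      rw [he]; exact ha
    · intro s hs0 hs
      have he : a + (t : ZMod n) + 1 - (s : ZMod n) = a + ((t - s : ℕ) : ZMod n) + 1 := by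
        rw [Nat.cast_sub (by omega : s ≤ t)]; ring
      rw [he]
      exact holeOf_not_mem hJ ha1 (mem_holeOf.mpr ⟨t - s, by omega, rfl⟩)
  rw [hg]
  push_cast
  ring

lemma holeOf_injOn (hJ : J.Nonempty) {a a' : ZMod n} (ha : a ∈ J) (ha1 : a + 1 ∉ J)
    (ha' : a' ∈ J) (ha1' : a' + 1 ∉ J) (h : holeOf hJ a = holeOf hJ a') : a = a' := by
  have hmem : a + 1 ∈ holeOf hJ a := mem_holeOf.mpr ⟨0, dd_pos hJ _, by simp⟩
  have h1 := eq_of_mem_holeOf hJ ha ha1 hmem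
  have h2 := eq_of_mem_holeOf hJ ha' ha1' (h ▸ hmem)
  rw [h1, h2]

end AuxHoles

section AuxHoles2

variable {n : ℕ} [NeZero n] {J : Finset (ZMod n)}

lemma holes_eq (hJ : J.Nonempty) :
    Finset.univ.filter (fun H => IsHole J H)
      = (J.filter (fun a => a + 1 ∉ J)).image (holeOf hJ) := by
  ext H
  simp only [Finset.mem_filter, Finset.mem_univ, true_and, Finset.mem_image]
  constructor
  · rintro ⟨a, h, hpos, rfl, hdisj, haJ, hend⟩
    have ha1 : a + 1 ∉ J := by
      refine hdisj _ ?_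
      exact Finset.mem_image.mpr ⟨0, Finset.mem_range.mpr hpos, by simp⟩
    have hdd : dd hJ (a + 1) = h := by
      refine dd_eq hJ hpos ?_ ?_
      · have he : (a + 1) + (h : ZMod n) = a + (h : ZMod n) + 1 := by ring
        rw [he]; exact hend
      · intro s hs0 hs
        have he : (a + 1) + (s : ZMod n) = a + (s : ZMod n) + 1 := by ring
        rw [he]
        exact hdisj _ (Finset.mem_image.mpr ⟨s, Finset.mem_range.mpr hs, rfl⟩)
    exact ⟨a, ⟨haJ, ha1⟩, by rw [holeOf, hdd]⟩
  · rintro ⟨a, haE, rfl⟩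
    obtain ⟨haJ, ha1⟩ := haE
    refine ⟨a, dd hJ (a + 1), dd_pos hJ _, rfl,
      fun y hy => holeOf_not_mem hJ ha1 hy, haJ, ?_⟩
    have he : a + ((dd hJ (a + 1) : ℕ) : ZMod n) + 1
        = (a + 1) + ((dd hJ (a + 1) : ℕ) : ZMod n) := by ring
    rw [he]; exact dd_spec hJ _

lemma card_holeOf_filter (hJ : J.Nonempty) {a : ZMod n} (ha1 : a + 1 ∉ J) (m : ℕ) :
    ((holeOf hJ a).filter (fun i => dd hJ i ≤ m)).card = min (dd hJ (a + 1)) m := by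
  set h := dd hJ (a + 1) with hh
  have hset : (Finset.range h).filter (fun t : ℕ => dd hJ (a + (t : ZMod n) + 1) ≤ m)
      = Finset.Ico (h - m) h := by
    ext t
    simp only [Finset.mem_filter, Finset.mem_range, Finset.mem_Ico]
    constructor
    · rintro ⟨ht, hd⟩
      rw [dd_holeOf hJ ha1 (hh ▸ ht)] at hd
      omega
    · rintro ⟨h1, h2⟩
      refine ⟨h2, ?_⟩
      rw [dd_holeOf hJ ha1 (hh ▸ h2)]
      omega
  have hinj : Set.InjOn (fun t : ℕ => a + (t : ZMod n) + 1)
      ((Finset.range h).filter (fun t : ℕ => dd hJ (a + (t : ZMod n) + 1) ≤ m)) := by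
    intro s hs t ht hst
    simp only [Finset.coe_filter, Set.mem_setOf_eq, Finset.mem_range] at hs ht
    have hc : (s : ZMod n) = (t : ZMod n) := by
      have := hst
      simpa [add_left_cancel_iff, add_right_cancel_iff] using this
    exact natCast_inj_of_lt (lt_of_lt_of_le hs.1 (hh ▸ dd_le hJ _))
      (lt_of_lt_of_le ht.1 (hh ▸ dd_le hJ _)) hc
  rw [holeOf, Finset.filter_image, ← hh, Finset.card_image_of_injOn hinj, hset, Nat.card_Ico]
  omega

end AuxHoles2

/-- for `x ∈ F_q^n` and `1 ≤ b ≤ n`,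
`w_b(x) = w_1(x) + Σ_{H hole, |H| ≤ b-1} |H| + Σ_{H hole, |H| ≥ b} (b-1)`. -/
theorem stmt0 {F : Type*} [Field F] {n b : ℕ} [NeZero n]
    (hb1 : 1 ≤ b) (hbn : b ≤ n) (x : ZMod n → F) :
    bwt n b x = bwt n 1 x
      + (∑ H ∈ Finset.univ.filter (fun H => IsHole (hSupp x) H ∧ H.card ≤ b - 1), H.card)
      + (∑ _H ∈ Finset.univ.filter (fun H => IsHole (hSupp x) H ∧ b ≤ H.card), (b - 1)) := by
  classical
  set J := hSupp x with hJdef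
  have hmemJ : ∀ i, i ∈ J ↔ x i ≠ 0 := fun i => by simp [hJdef, hSupp]
  -- combine the two hole sums into one
  have hsum : (∑ H ∈ Finset.univ.filter (fun H => IsHole J H ∧ H.card ≤ b - 1), H.card)
      + (∑ _H ∈ Finset.univ.filter (fun H => IsHole J H ∧ b ≤ H.card), (b - 1))
      = ∑ H ∈ Finset.univ.filter (fun H => IsHole J H), min H.card (b - 1) := by
    have h1 : Finset.univ.filter (fun H : Finset (ZMod n) => IsHole J H ∧ H.card ≤ b - 1)
        = (Finset.univ.filter (fun H => IsHole J H)).filter (fun H => H.card ≤ b - 1) := by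
      rw [Finset.filter_filter]
    have h2 : Finset.univ.filter (fun H : Finset (ZMod n) => IsHole J H ∧ b ≤ H.card)
        = (Finset.univ.filter (fun H => IsHole J H)).filter
            (fun H => ¬ (H.card ≤ b - 1)) := by
      rw [Finset.filter_filter]
      apply Finset.filter_congr
      intro H _
      constructor
      · rintro ⟨hH, hc⟩; exact ⟨hH, by omega⟩
      · rintro ⟨hH, hc⟩; exact ⟨hH, by omega⟩
    rw [h1, h2, ← Finset.sum_filter_add_sum_filter_not
      (Finset.univ.filter (fun H => IsHole J H)) (fun H => H.card ≤ b - 1)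
      (fun H => min H.card (b - 1))]
    congr 1
    · refine Finset.sum_congr rfl fun H hH => ?_
      have := (Finset.mem_filter.mp hH).2
      omega
    · refine Finset.sum_congr rfl fun H hH => ?_
      have := (Finset.mem_filter.mp hH).2
      omega
  rw [add_assoc, hsum]
  -- Hamming weight
  have hbwt1 : bwt n 1 x = J.card := by
    unfold bwt
    congr 1
    ext i
    simp [hJdef, hSupp, Nat.lt_one_iff]
  by_cases hJe : J = ∅
  · have hx : ∀ i, x i = 0 := by
      intro i
      by_contra h
      have : i ∈ J := (hmemJ i).mpr h
      simp [hJe] at this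
    have hz : bwt n b x = 0 := by unfold bwt; simp [hx]
    have hz1 : bwt n 1 x = 0 := by unfold bwt; simp [hx]
    have hh : Finset.univ.filter (fun H => IsHole J H) = ∅ := by
      ext H
      simp only [Finset.mem_filter, Finset.mem_univ, true_and, Finset.notMem_empty,
        iff_false]
      rintro ⟨a, h, _, _, _, haJ, _⟩
      simp [hJe] at haJ
    rw [hz, hz1, hh]
    simp
  · have hJ : J.Nonempty := Finset.nonempty_iff_ne_empty.mpr hJe
    set E := J.filter (fun a => a + 1 ∉ J) with hE
    set S := Finset.univ.filter (fun i : ZMod n => i ∉ J ∧ dd hJ i ≤ b - 1) with hS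
    have hbwtb : bwt n b x = J.card + S.card := by
      have hset : Finset.univ.filter (fun i : ZMod n => ∃ j < b, x (i + (j : ZMod n)) ≠ 0)
          = J ∪ S := by
        ext i
        simp only [Finset.mem_filter, Finset.mem_univ, true_and, Finset.mem_union, hS]
        constructor
        · rintro ⟨j, hjb, hxj⟩
          by_cases hiJ : i ∈ J
          · exact Or.inl hiJ
          · have hij : i + (j : ZMod n) ∈ J := (hmemJ _).mpr hxj
            have hj0 : 0 < j := by
              rcases Nat.eq_zero_or_pos j with rfl | h
              · simp only [Nat.cast_zero, add_zero] at hij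
                exact absurd hij hiJ
              · exact h
            have hdij : dd hJ i ≤ j := by
              by_contra h
              push_neg at h
              exact dd_min hJ hj0 h hij
            exact Or.inr ⟨hiJ, by omega⟩
        · rintro (hiJ | ⟨hiJ, hdi⟩)
          · exact ⟨0, by omega, by simpa using (hmemJ i).mp hiJ⟩
          · refine ⟨dd hJ i, by omega, ?_⟩
            exact (hmemJ _).mp (dd_spec hJ i)
      unfold bwt
      rw [hset, Finset.card_union_of_disjoint]
      refine Finset.disjoint_left.mpr ?_
      intro i hiJ hiS
      rw [hS, Finset.mem_filter] at hiS
      exact hiS.2.1 hiJ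
    have hholes := holes_eq hJ
    have hsum2 : ∑ H ∈ Finset.univ.filter (fun H => IsHole J H), min H.card (b - 1)
        = ∑ a ∈ E, min (dd hJ (a + 1)) (b - 1) := by
      rw [hholes, ← hE, Finset.sum_image ?hinj]
      · refine Finset.sum_congr rfl fun a ha => ?_
        rw [card_holeOf]
      · intro a ha a' ha' h
        rw [hE, Finset.mem_coe, Finset.mem_filter] at ha ha'
        exact holeOf_injOn hJ ha.1 ha.2 ha'.1 ha'.2 h
    have hSsum : S.card = ∑ a ∈ E, min (dd hJ (a + 1)) (b - 1) := by
      have hSb : S = E.biUnion (fun a => (holeOf hJ a).filter (fun i => dd hJ i ≤ b - 1)) := by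
        ext i
        simp only [hS, Finset.mem_filter, Finset.mem_univ, true_and, Finset.mem_biUnion]
        constructor
        · rintro ⟨hiJ, hdi⟩
          obtain ⟨a, haJ, ha1, hmem⟩ := mem_hole_of_not_mem hJ hiJ
          exact ⟨a, by rw [hE, Finset.mem_filter]; exact ⟨haJ, ha1⟩, ⟨hmem, hdi⟩⟩
        · rintro ⟨a, haE, hi⟩
          rw [hE, Finset.mem_filter] at haE
          exact ⟨holeOf_not_mem hJ haE.2 hi.1, hi.2⟩
      rw [hSb, Finset.card_biUnion]
      · refine Finset.sum_congr rfl fun a ha => ?_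
        rw [hE, Finset.mem_filter] at ha
        exact card_holeOf_filter hJ ha.2 (b - 1)
      · intro a ha a' ha' hne
        rw [hE, Finset.mem_coe, Finset.mem_filter] at ha ha'
        refine Finset.disjoint_left.mpr ?_
        intro i hi hi'
        exact absurd ((eq_of_mem_holeOf hJ ha.1 ha.2 (Finset.mem_filter.mp hi).1).trans
          (eq_of_mem_holeOf hJ ha'.1 ha'.2 (Finset.mem_filter.mp hi').1).symm) hne
    rw [hbwtb, hbwt1, hsum2, hSsum]
end

section
/- Let C be an [n,k]_q linear code. If there exists a nonzero codeword c ∈ C with Hamming weight w_1(c) = d_1(C) whose Hamming support χ_1(c) is a successive (cyclically consecutive, at most one hole) subset of Z_n, then for every 1 ≤ b ≤ n, the minimum b-symbol distance d_b(C) = min{d_1(C) + b − 1, n}. -/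
open scoped Classical
open Finset

section Aux

variable {n : ℕ} [NeZero n]

noncomputable def Tb (S : Finset (ZMod n)) (b : ℕ) : Finset (ZMod n) :=
  Finset.univ.filter (fun i => ∃ j < b, i + (j : ZMod n) ∈ S)

lemma mem_Tb {S : Finset (ZMod n)} {b : ℕ} {i : ZMod n} :
    i ∈ Tb S b ↔ ∃ j < b, i + (j : ZMod n) ∈ S := by
  simp [Tb]

lemma S_subset_Tb {S : Finset (ZMod n)} {b : ℕ} (hb : 1 ≤ b) : S ⊆ Tb S b := by
  intro s hs
  exact mem_Tb.2 ⟨0, hb, by simpa using hs⟩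

lemma Tb_mono {S : Finset (ZMod n)} {b b' : ℕ} (h : b ≤ b') : Tb S b ⊆ Tb S b' := by
  intro i hi
  obtain ⟨j, hj, hmem⟩ := mem_Tb.1 hi
  exact mem_Tb.2 ⟨j, lt_of_lt_of_le hj h, hmem⟩

lemma Tb_card_le_n (S : Finset (ZMod n)) (b : ℕ) : (Tb S b).card ≤ n := by
  calc (Tb S b).card ≤ Finset.univ.card := Finset.card_le_card (Finset.filter_subset _ _)
  _ = n := by simp [ZMod.card]

lemma shift_univ (T : Finset (ZMod n)) (hne : T.Nonempty)
    (hcl : ∀ i ∈ T, i - 1 ∈ T) : T = Finset.univ := by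
  obtain ⟨t, ht⟩ := hne
  have key : ∀ k : ℕ, t - (k : ZMod n) ∈ T := by
    intro k
    induction k with
    | zero => simpa using ht
    | succ k ih =>
      have e : t - ((k + 1 : ℕ) : ZMod n) = t - (k : ZMod n) - 1 := by push_cast; ring
      rw [e]; exact hcl _ ih
  ext x
  simp only [Finset.mem_univ, iff_true]
  have : t - (((t - x).val : ℕ) : ZMod n) = x := by
    rw [ZMod.natCast_rightInverse (t - x)]; ring
  rw [← this]; exact key _

lemma Tb_card_ge (S : Finset (ZMod n)) (hS : S.Nonempty) :
    ∀ b, 1 ≤ b → min (S.card + b - 1) n ≤ (Tb S b).card := by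
  intro b hb
  induction b, hb using Nat.le_induction with
  | base =>
    have := Finset.card_le_card (S_subset_Tb (S := S) le_rfl)
    omega
  | succ b hb ih =>
    by_cases hU : Tb S (b + 1) = Finset.univ
    · have : (Tb S (b+1)).card = n := by rw [hU]; simp [ZMod.card]
      omega
    · have hlt : (Tb S b).card < (Tb S (b + 1)).card := by
        apply Finset.card_lt_card
        refine ⟨Tb_mono (Nat.le_succ b), ?_⟩
        intro hrev
        apply hU
        apply shift_univ
        · exact hS.mono (S_subset_Tb (by omega))
        · intro i hi
          have hib : i ∈ Tb S b := hrev hi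
          obtain ⟨j, hj, hmem⟩ := mem_Tb.1 hib
          refine mem_Tb.2 ⟨j + 1, by omega, ?_⟩
          have : i - 1 + ((j + 1 : ℕ) : ZMod n) = i + (j : ZMod n) := by push_cast; ring
          rw [this]; exact hmem
      omega
end Aux
section Aux

variable {n : ℕ} [NeZero n]

lemma exists_hole (S : Finset (ZMod n)) (ℓ : ZMod n) (hℓ : ℓ ∈ S) (hℓ1 : ℓ - 1 ∉ S)
    (hn : 1 < n) :
    ∃ H, IsHole S H ∧ ℓ - 1 ∈ H ∧
      ∀ x ∈ H, ∃ s : ℕ, 1 ≤ s ∧ x = ℓ - (s : ZMod n) ∧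
        ∀ s' : ℕ, 1 ≤ s' → s' ≤ s → ℓ - (s' : ZMod n) ∉ S := by
  have hex : ∃ t : ℕ, 0 < t ∧ ℓ - ((t : ZMod n) + 1) ∈ S := by
    refine ⟨n - 1, by omega, ?_⟩
    have e : ((n - 1 : ℕ) : ZMod n) + 1 = 0 := by
      have : ((n - 1 : ℕ) : ZMod n) + 1 = ((n : ℕ) : ZMod n) := by
        push_cast [Nat.cast_sub (by omega : 1 ≤ n)]; ring
      rw [this, ZMod.natCast_self]
    rw [e, sub_zero]; exact hℓ
  set h := Nat.find hex with hh
  obtain ⟨hpos, haS⟩ := Nat.find_spec hex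
  set a := ℓ - ((h : ZMod n) + 1) with ha
  have hmin : ∀ t : ℕ, 0 < t → t < h → ℓ - ((t : ZMod n) + 1) ∉ S := by
    intro t ht hth hmem
    exact Nat.find_min hex hth ⟨ht, hmem⟩
  have hnotS : ∀ s : ℕ, 1 ≤ s → s ≤ h → ℓ - (s : ZMod n) ∉ S := by
    intro s h1 h2
    rcases eq_or_lt_of_le h1 with e | lt
    · rw [← e]; simpa using hℓ1
    · have e : ((s : ℕ) : ZMod n) = ((s - 1 : ℕ) : ZMod n) + 1 := by
        push_cast [Nat.cast_sub (by omega : 1 ≤ s)]; ring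
      rw [e]; exact hmin (s - 1) (by omega) (by omega)
  have helem : ∀ t : ℕ, t < h → a + (t : ZMod n) + 1 = ℓ - ((h - t : ℕ) : ZMod n) := by
    intro t ht
    rw [ha, Nat.cast_sub (le_of_lt ht)]; ring
  refine ⟨Finset.image (fun t : ℕ => a + (t : ZMod n) + 1) (Finset.range h),
    ⟨a, h, hpos, rfl, ?_, ?_, ?_⟩, ?_, ?_⟩
  · intro x hx
    obtain ⟨t, ht, rfl⟩ := Finset.mem_image.1 hx
    have ht' := Finset.mem_range.1 ht
    rw [helem t ht']
    exact hnotS (h - t) (by omega) (by omega)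
  · exact haS
  · have : a + (h : ZMod n) + 1 = ℓ := by rw [ha]; ring
    rw [this]; exact hℓ
  · refine Finset.mem_image.2 ⟨h - 1, Finset.mem_range.2 (by omega), ?_⟩
    rw [helem (h - 1) (by omega)]
    congr 1
    have : h - (h - 1) = 1 := by omega
    rw [this, Nat.cast_one]
  · intro x hx
    obtain ⟨t, ht, rfl⟩ := Finset.mem_image.1 hx
    have ht' := Finset.mem_range.1 ht
    refine ⟨h - t, by omega, helem t ht', ?_⟩
    intro s' h1 h2
    exact hnotS s' h1 (by omega)

-- omega can't see t < h gives 1 ≤ h - t? it can: ht' in context needed. fix below if error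
end Aux
section Aux

variable {n : ℕ} [NeZero n]





lemma leftEnd_card (S : Finset (ZMod n))
    (hsucc : (Finset.univ.filter (fun H => IsHole S H)).card ≤ 1) :
    (S.filter (fun ℓ => ℓ - 1 ∉ S)).card ≤ 1 := by
  rcases le_or_gt n 1 with hn | hn
  · calc (S.filter (fun ℓ => ℓ - 1 ∉ S)).card ≤ Finset.univ.card :=
        Finset.card_le_card (Finset.subset_univ _)
    _ = n := by simp [ZMod.card]
    _ ≤ 1 := hn
  · rw [Finset.card_le_one]
    intro ℓ hℓ ℓ' hℓ'
    simp only [Finset.mem_filter] at hℓ hℓ'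
    obtain ⟨H, hH, hmem, hchar⟩ := exists_hole S ℓ hℓ.1 hℓ.2 hn
    obtain ⟨H', hH', hmem', _⟩ := exists_hole S ℓ' hℓ'.1 hℓ'.2 hn
    have hHH : H = H' := by
      refine Finset.card_le_one.1 hsucc H ?_ H' ?_ <;>
        exact Finset.mem_filter.2 ⟨Finset.mem_univ _, by assumption⟩
    obtain ⟨s, hs1, hseq, hsall⟩ := hchar (ℓ' - 1) (hHH ▸ hmem')
    rcases eq_or_lt_of_le hs1 with h1 | h2
    · have : ℓ' - 1 = ℓ - 1 := by rw [hseq, ← h1, Nat.cast_one]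
      have := sub_left_injective.eq_iff.1 this  -- may not exist; fix later
      exact this.symm ▸ rfl
    · exfalso
      have he : ℓ' = ℓ - ((s - 1 : ℕ) : ZMod n) := by
        have : ℓ' - 1 = ℓ - (s : ZMod n) := hseq
        have e2 : ((s - 1 : ℕ) : ZMod n) = (s : ZMod n) - 1 := by
          push_cast [Nat.cast_sub (by omega : 1 ≤ s)]; ring
        rw [e2]
        linear_combination this
      exact hsall (s - 1) (by omega) (by omega) (he ▸ hℓ'.1)

lemma Tb_card_le (S : Finset (ZMod n)) (b : ℕ) (hb : 1 ≤ b)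
    (hLE : (S.filter (fun ℓ => ℓ - 1 ∉ S)).card ≤ 1) :
    (Tb S b).card ≤ S.card + (b - 1) := by
  have hsub : S ⊆ Tb S b := S_subset_Tb hb
  have hcard : ((Tb S b) \ S).card ≤ b - 1 := by
    have : ((Tb S b) \ S).card ≤ (Finset.Icc 1 (b - 1)).card := by
      apply Finset.card_le_card_of_injOn
        (fun i => if hx : ∃ j : ℕ, 0 < j ∧ i + (j : ZMod n) ∈ S then Nat.find hx else 0)
      · intro i hi
        rw [Finset.mem_coe, Finset.mem_sdiff] at hi
        obtain ⟨j, hj, hjm⟩ := mem_Tb.1 hi.1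
        have hj0 : 0 < j := by
          rcases Nat.eq_zero_or_pos j with rfl | h
          · exact absurd (by simpa using hjm) hi.2
          · exact h
        have hx : ∃ j : ℕ, 0 < j ∧ i + (j : ZMod n) ∈ S := ⟨j, hj0, hjm⟩
        simp only [hx, dif_pos]
        have h1 := (Nat.find_spec hx).1
        have h2 : Nat.find hx ≤ j := Nat.find_min' hx ⟨hj0, hjm⟩
        exact Finset.mem_Icc.2 ⟨h1, by omega⟩
      · have key : ∀ i : ZMod n, i ∈ Tb S b \ S →
            ∀ hx : ∃ j : ℕ, 0 < j ∧ i + (j : ZMod n) ∈ S,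
            i + ((Nat.find hx : ℕ) : ZMod n) ∈ S.filter (fun ℓ => ℓ - 1 ∉ S) := by
          intro i hi hx
          rw [Finset.mem_sdiff] at hi
          obtain ⟨hf0, hfS⟩ := Nat.find_spec hx
          refine Finset.mem_filter.2 ⟨hfS, ?_⟩
          rcases eq_or_lt_of_le (show 1 ≤ Nat.find hx from hf0) with h1 | h2
          · have : i + ((Nat.find hx : ℕ) : ZMod n) - 1 = i := by
              rw [← h1, Nat.cast_one]; ring
            rw [this]; exact hi.2
          · intro hmem
            apply Nat.find_min hx (m := Nat.find hx - 1) (by omega)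
            refine ⟨by omega, ?_⟩
            have e : i + ((Nat.find hx - 1 : ℕ) : ZMod n)
                = i + ((Nat.find hx : ℕ) : ZMod n) - 1 := by
              push_cast [Nat.cast_sub (by omega : 1 ≤ Nat.find hx)]; ring
            rw [e]; exact hmem
        intro i hi i' hi' heq
        have hi2 := Finset.mem_coe.1 hi
        have hi2' := Finset.mem_coe.1 hi'
        have hmem := Finset.mem_sdiff.1 hi2
        have hmem' := Finset.mem_sdiff.1 hi2'
        obtain ⟨j, hj, hjm⟩ := mem_Tb.1 hmem.1
        obtain ⟨j', hj', hjm'⟩ := mem_Tb.1 hmem'.1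
        have hj0 : 0 < j := by
          rcases Nat.eq_zero_or_pos j with rfl | h
          · exact absurd (by simpa using hjm) hmem.2
          · exact h
        have hj0' : 0 < j' := by
          rcases Nat.eq_zero_or_pos j' with rfl | h
          · exact absurd (by simpa using hjm') hmem'.2
          · exact h
        have hx : ∃ j : ℕ, 0 < j ∧ i + (j : ZMod n) ∈ S := ⟨j, hj0, hjm⟩
        have hx' : ∃ j : ℕ, 0 < j ∧ i' + (j : ZMod n) ∈ S := ⟨j', hj0', hjm'⟩
        simp only [hx, hx', dif_pos] at heq
        have k1 := key i hi2 hx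
        have k2 := key i' hi2' hx'
        rw [heq] at k1
        have : i + ((Nat.find hx' : ℕ) : ZMod n) = i' + ((Nat.find hx' : ℕ) : ZMod n) :=
          Finset.card_le_one.1 hLE _ k1 _ k2
        exact add_right_cancel this
    simpa using this
  have := Finset.card_sdiff_add_card_eq_card hsub
  omega
end Aux
section Main
variable {F : Type*} [Field F] {n : ℕ} [NeZero n]

lemma bwt_eq_Tb (b : ℕ) (x : ZMod n → F) : bwt n b x = (Tb (hSupp x) b).card := by
  unfold bwt Tb
  congr 1
  apply Finset.filter_congr
  intro i _
  simp [hSupp]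

lemma bwt_one (x : ZMod n → F) : bwt n 1 x = (hSupp x).card := by
  unfold bwt
  congr 1
  ext i
  simp only [Finset.mem_filter, Finset.mem_univ, true_and, hSupp]
  constructor
  · rintro ⟨j, hj, hne⟩
    interval_cases j
    simpa using hne
  · intro h
    exact ⟨0, by omega, by simpa using h⟩

lemma hSupp_nonempty {x : ZMod n → F} (hx : x ≠ 0) : (hSupp x).Nonempty := by
  obtain ⟨i, hi⟩ := Function.ne_iff.1 hx
  exact ⟨i, by simpa [hSupp] using hi⟩

theorem stmt1' (C : Submodule F (ZMod n → F)) (c : ZMod n → F)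
    (hc : c ∈ C) (hc0 : c ≠ 0)
    (hw : bwt n 1 c = bDist n 1 (C : Set (ZMod n → F)))
    (hsucc : (Finset.univ.filter (fun H => IsHole (hSupp c) H)).card ≤ 1) :
    ∀ b : ℕ, 1 ≤ b → b ≤ n →
      bDist n b (C : Set (ZMod n → F))
        = min (bDist n 1 (C : Set (ZMod n → F)) + b - 1) n := by
  intro b hb1 _
  have hwit : bwt n b c ∈ {w | ∃ u ∈ (C : Set (ZMod n → F)), ∃ v ∈ (C : Set (ZMod n → F)),
      u ≠ v ∧ bwt n b (u - v) = w} :=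
    ⟨c, hc, 0, C.zero_mem, hc0, by rw [sub_zero]⟩
  have hd1 : bDist n 1 (C : Set (ZMod n → F)) = (hSupp c).card := by
    rw [← hw, bwt_one]
  apply le_antisymm
  · -- upper bound
    have h1 : bDist n b (C : Set (ZMod n → F)) ≤ bwt n b c := Nat.sInf_le hwit
    have h2 : bwt n b c ≤ (hSupp c).card + (b - 1) := by
      rw [bwt_eq_Tb]
      exact Tb_card_le _ b hb1 (leftEnd_card _ hsucc)
    have h3 : bwt n b c ≤ n := by
      rw [bwt_eq_Tb]; exact Tb_card_le_n _ b
    rw [hd1]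
    omega
  · -- lower bound
    apply le_csInf ⟨_, hwit⟩
    rintro w ⟨u, hu, v, hv, huv, rfl⟩
    have hx0 : u - v ≠ 0 := sub_ne_zero.2 huv
    have hlow : min ((hSupp (u - v)).card + b - 1) n ≤ bwt n b (u - v) := by
      rw [bwt_eq_Tb]
      exact Tb_card_ge _ (hSupp_nonempty hx0) b hb1
    have hd1le : bDist n 1 (C : Set (ZMod n → F)) ≤ (hSupp (u - v)).card := by
      rw [← bwt_one]
      exact Nat.sInf_le ⟨u, hu, v, hv, huv, rfl⟩
    omega

end Main
/-- if a minimum-Hamming-weight codeword has successive support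
(at most one hole), then `d_b(C) = min{d_1(C) + b - 1, n}` for every `1 ≤ b ≤ n`. -/
theorem stmt1 {F : Type*} [Field F] {n : ℕ} [NeZero n]
    (C : Submodule F (ZMod n → F)) (c : ZMod n → F)
    (hc : c ∈ C) (hc0 : c ≠ 0)
    (hw : bwt n 1 c = bDist n 1 (C : Set (ZMod n → F)))
    (hsucc : (Finset.univ.filter (fun H => IsHole (hSupp c) H)).card ≤ 1) :
    ∀ b : ℕ, 1 ≤ b → b ≤ n →
      bDist n b (C : Set (ZMod n → F))
        = min (bDist n 1 (C : Set (ZMod n → F)) + b - 1) n := by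
  exact stmt1' C c hc hc0 hw hsucc
end

section
/- For any [n,k]_q linear code C with k ≥ 1 and any 1 ≤ b ≤ n, the minimum b-symbol distance satisfies the Singleton-like bound d_b(C) ≤ min{n − k + b, n}. -/
open scoped Classical
open Finset

/-- Singleton-like bound `d_b(C) ≤ min{n - k + b, n}` for an
`[n,k]_q` linear code with `k ≥ 1` and `1 ≤ b ≤ n`. -/
theorem stmt2 {F : Type*} [Field F] {n k b : ℕ} [NeZero n]
    (C : Submodule F (ZMod n → F)) (hk : Module.finrank F C = k) (hk1 : 1 ≤ k)
    (hb1 : 1 ≤ b) (hbn : b ≤ n) :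
    bDist n b (C : Set (ZMod n → F)) ≤ min (n - k + b) n := by
  have hkn : k ≤ n := by
    have h1 := Submodule.finrank_le C
    rw [hk, Module.finrank_fintype_fun_eq_card, ZMod.card] at h1
    exact h1
  -- projection onto the first k-1 coordinates
  let φ : C →ₗ[F] (Fin (k - 1) → F) :=
    { toFun := fun c i => (c : ZMod n → F) (((i : ℕ) : ZMod n))
      map_add' := fun x y => rfl
      map_smul' := fun r x => rfl }
  have hker : LinearMap.ker φ ≠ ⊥ := by
    intro h
    have hinj : Function.Injective φ := LinearMap.ker_eq_bot.mp h
    have hle := LinearMap.finrank_le_finrank_of_injective hinj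
    rw [hk, Module.finrank_fintype_fun_eq_card, Fintype.card_fin] at hle
    omega
  obtain ⟨c, hc0, hcne⟩ := (Submodule.ne_bot_iff _).mp hker
  have hzero : ∀ s : ℕ, s < k - 1 → (c : ZMod n → F) ((s : ZMod n)) = 0 := by
    intro s hs
    have := congrFun (LinearMap.mem_ker.mp hc0) ⟨s, hs⟩
    simpa [φ] using this
  -- b-symbol weight bound
  have hbwt : bwt n b (c : ZMod n → F) ≤ n - k + b := by
    have hsub : (Finset.univ.filter
        (fun i : ZMod n => ∃ j < b, (c : ZMod n → F) (i + (j : ZMod n)) ≠ 0))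
        ⊆ Finset.image (fun m : ℤ => (m : ZMod n)) (Finset.Ico ((k : ℤ) - b) (n : ℤ)) := by
      intro i hi
      simp only [Finset.mem_filter, Finset.mem_univ, true_and] at hi
      obtain ⟨j, hj, hne⟩ := hi
      set x := i + (j : ZMod n) with hx
      have hs : ((x.val : ℕ) : ZMod n) = x := ZMod.natCast_rightInverse x
      have hsn : x.val < n := x.val_lt
      have hsk : k - 1 ≤ x.val := by
        by_contra h
        push_neg at h
        exact hne (hs ▸ hzero x.val h)
      refine Finset.mem_image.mpr ⟨(x.val : ℤ) - (j : ℤ),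
        Finset.mem_Ico.mpr ⟨by omega, by omega⟩, ?_⟩
      push_cast
      rw [hs, hx]
      ring
    calc bwt n b (c : ZMod n → F)
        ≤ (Finset.image (fun m : ℤ => (m : ZMod n)) (Finset.Ico ((k : ℤ) - b) (n : ℤ))).card :=
          Finset.card_le_card hsub
      _ ≤ (Finset.Ico ((k : ℤ) - b) (n : ℤ)).card := Finset.card_image_le
      _ = ((n : ℤ) - ((k : ℤ) - b)).toNat := Int.card_Ico _ _
      _ = n - k + b := by omega
  have hbwtn : bwt n b (c : ZMod n → F) ≤ n := by
    calc bwt n b (c : ZMod n → F) ≤ (Finset.univ : Finset (ZMod n)).card :=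
          Finset.card_filter_le _ _
      _ = n := by rw [Finset.card_univ, ZMod.card]
  have hcoene : (c : ZMod n → F) ≠ 0 := fun h => hcne (by exact_mod_cast Subtype.ext h)
  have hmem : bwt n b (c : ZMod n → F) ∈
      {w | ∃ u ∈ (C : Set (ZMod n → F)), ∃ v ∈ (C : Set (ZMod n → F)),
        u ≠ v ∧ bwt n b (u - v) = w} :=
    ⟨(c : ZMod n → F), c.2, 0, C.zero_mem, hcoene, by rw [sub_zero]⟩
  exact le_trans (Nat.sInf_le hmem) (le_min hbwt hbwtn)
end

section
/- Let 1 ≤ b_1 ≤ b_2 ≤ n and let C be an [n,k]_q linear code. If C is a b_1-symbol MDS code (i.e., d_{b_1}(C) = min{n−k+b_1, n}), then C is also a b_2-symbol MDS code, i.e., d_{b_2}(C) = min{n−k+b_2, n}. -/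
open scoped Classical
open Finset

lemma bwt_le_n {F : Type*} [Field F] (n b : ℕ) [NeZero n] (x : ZMod n → F) :
    bwt n b x ≤ n := by
  calc bwt n b x ≤ (Finset.univ : Finset (ZMod n)).card := Finset.card_filter_le _ _
    _ = n := by simp [ZMod.card]

lemma bwt_mono {F : Type*} [Field F] (n : ℕ) {b b' : ℕ} [NeZero n] (x : ZMod n → F)
    (h : b ≤ b') : bwt n b x ≤ bwt n b' x := by
  apply Finset.card_le_card
  intro i hi
  simp only [Finset.mem_filter] at hi ⊢
  obtain ⟨_, j, hj, hx⟩ := hi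
  exact ⟨Finset.mem_univ _, j, lt_of_lt_of_le hj h, hx⟩

/-- Boundary lemma: a nonempty proper subset of `ZMod n` has a point outside
whose successor is inside. -/
lemma exists_boundary {n : ℕ} [NeZero n] (A : Finset (ZMod n)) (hne : A.Nonempty)
    (hnu : A ≠ Finset.univ) : ∃ i, i ∉ A ∧ i + 1 ∈ A := by
  obtain ⟨a, ha⟩ := hne
  obtain ⟨c, hc⟩ : ∃ c, c ∉ A := by
    by_contra h
    push_neg at h
    exact hnu (Finset.eq_univ_iff_forall.2 h)
  have hex : ∃ t : ℕ, c + (t : ZMod n) ∈ A := by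
    refine ⟨(a - c).val, ?_⟩
    have : ((a - c).val : ZMod n) = a - c := by
      rw [ZMod.natCast_val, ZMod.cast_id]
    rw [this]
    simpa using ha
  classical
  let t₀ := Nat.find hex
  have ht₀ : c + (t₀ : ZMod n) ∈ A := Nat.find_spec hex
  have h0 : t₀ ≠ 0 := by
    intro h
    rw [h] at ht₀
    simp only [Nat.cast_zero, add_zero] at ht₀
    exact hc ht₀
  refine ⟨c + ((t₀ - 1 : ℕ) : ZMod n), ?_, ?_⟩
  · exact Nat.find_min hex (by omega)
  · have : c + ((t₀ - 1 : ℕ) : ZMod n) + 1 = c + (t₀ : ZMod n) := by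
      have h1 : ((t₀ - 1 : ℕ) : ZMod n) + 1 = ((t₀ - 1 + 1 : ℕ) : ZMod n) := by push_cast; ring
      rw [add_assoc, h1, Nat.sub_add_cancel (by omega)]
    rw [this]; exact ht₀

lemma bwt_succ {F : Type*} [Field F] (n b : ℕ) [NeZero n] (x : ZMod n → F)
    (hx : x ≠ 0) (hb : 1 ≤ b) : min (bwt n b x + 1) n ≤ bwt n (b + 1) x := by
  set A := (Finset.univ.filter (fun i : ZMod n => ∃ j < b, x (i + (j : ZMod n)) ≠ 0)) with hA
  have hAne : A.Nonempty := by
    obtain ⟨i, hi⟩ : ∃ i, x i ≠ 0 := by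
      by_contra h; push_neg at h; exact hx (funext h)
    exact ⟨i, by simp only [hA, Finset.mem_filter]; exact ⟨Finset.mem_univ _, 0, hb, by simpa using hi⟩⟩
  by_cases hU : A = Finset.univ
  · have h1 : bwt n b x = n := by
      simp only [bwt, ← hA, hU]; simp [ZMod.card]
    have h2 : bwt n b x ≤ bwt n (b + 1) x := bwt_mono n x (by omega)
    omega
  · obtain ⟨i, hiA, hi1A⟩ := exists_boundary A hAne hU
    have hsub : insert i A ⊆ (Finset.univ.filter
        (fun i : ZMod n => ∃ j < b + 1, x (i + (j : ZMod n)) ≠ 0)) := by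
      intro m hm
      rcases Finset.mem_insert.1 hm with h | h
      · rw [h]
        simp only [hA, Finset.mem_filter] at hi1A
        obtain ⟨_, j, hj, hxj⟩ := hi1A
        refine Finset.mem_filter.2 ⟨Finset.mem_univ _, j + 1, by omega, ?_⟩
        have : i + ((j + 1 : ℕ) : ZMod n) = i + 1 + (j : ZMod n) := by push_cast; ring
        rw [this]; exact hxj
      · simp only [hA, Finset.mem_filter] at h
        obtain ⟨_, j, hj, hxj⟩ := h
        exact Finset.mem_filter.2 ⟨Finset.mem_univ _, j, by omega, hxj⟩
    have hcard : (insert i A).card = A.card + 1 := Finset.card_insert_of_notMem hiA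
    have : (insert i A).card ≤ bwt n (b + 1) x := Finset.card_le_card hsub
    have hbwt : bwt n b x = A.card := rfl
    omega

lemma bwt_add {F : Type*} [Field F] (n b : ℕ) [NeZero n] (x : ZMod n → F)
    (hx : x ≠ 0) (hb : 1 ≤ b) (d : ℕ) : min (bwt n b x + d) n ≤ bwt n (b + d) x := by
  induction d with
  | zero => simp only [Nat.add_zero]; exact min_le_left (bwt n b x) n
  | succ d ih =>
    have h1 := bwt_succ n (b + d) x hx (by omega)
    have h2 : b + (d + 1) = b + d + 1 := by omega
    rw [h2]
    have h3 := bwt_le_n n (b + d) x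
    omega

/-- if `C` is `b₁`-symbol MDS and `1 ≤ b₁ ≤ b₂ ≤ n`, then `C` is
`b₂`-symbol MDS. -/
theorem stmt3 {F : Type*} [Field F] {n k b₁ b₂ : ℕ} [NeZero n]
    (C : Submodule F (ZMod n → F)) (hk : Module.finrank F C = k)
    (hb1 : 1 ≤ b₁) (hb12 : b₁ ≤ b₂) (hb2 : b₂ ≤ n)
    (hMDS : bDist n b₁ (C : Set (ZMod n → F)) = min (n - k + b₁) n) :
    bDist n b₂ (C : Set (ZMod n → F)) = min (n - k + b₂) n := by
  have hn : 1 ≤ n := le_trans (le_trans hb1 hb12) hb2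
  set S₁ : Set ℕ := {w | ∃ u ∈ (C : Set (ZMod n → F)), ∃ v ∈ (C : Set (ZMod n → F)),
      u ≠ v ∧ bwt n b₁ (u - v) = w} with hS₁
  set S₂ : Set ℕ := {w | ∃ u ∈ (C : Set (ZMod n → F)), ∃ v ∈ (C : Set (ZMod n → F)),
      u ≠ v ∧ bwt n b₂ (u - v) = w} with hS₂
  have hS₁ne : S₁.Nonempty := by
    rw [Set.nonempty_iff_ne_empty]
    intro h
    have : bDist n b₁ (C : Set (ZMod n → F)) = 0 := by
      rw [bDist, ← hS₁, h, Nat.sInf_empty]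
    omega
  obtain ⟨w₁, u₀, hu₀, v₀, hv₀, huv₀, hw₁⟩ := hS₁ne
  have hS₂ne : S₂.Nonempty := ⟨bwt n b₂ (u₀ - v₀), u₀, hu₀, v₀, hv₀, huv₀, rfl⟩
  -- k ≤ n
  have hkn : k ≤ n := by
    rw [← hk]
    calc Module.finrank F C ≤ Module.finrank F (ZMod n → F) := Submodule.finrank_le C
      _ = n := by rw [Module.finrank_fintype_fun_eq_card, ZMod.card]
  -- lower bound
  have hlb : min (n - k + b₂) n ≤ bDist n b₂ (C : Set (ZMod n → F)) := by
    rw [bDist, ← hS₂]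
    apply le_csInf hS₂ne
    rintro w ⟨u, hu, v, hv, huv, rfl⟩
    have hx : u - v ≠ 0 := sub_ne_zero.2 huv
    have hmem : bwt n b₁ (u - v) ∈ S₁ := ⟨u, hu, v, hv, huv, rfl⟩
    have h1 : min (n - k + b₁) n ≤ bwt n b₁ (u - v) := by
      rw [← hMDS, bDist, ← hS₁]; exact Nat.sInf_le hmem
    have h2 := bwt_add n b₁ (u - v) hx hb1 (b₂ - b₁)
    rw [Nat.add_sub_cancel' hb12] at h2
    omega
  -- upper bound
  have hub : bDist n b₂ (C : Set (ZMod n → F)) ≤ min (n - k + b₂) n := by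
    rcases le_or_gt k b₂ with hkb | hbk
    · -- min = n; any element of S₂ is ≤ n
      have : bDist n b₂ (C : Set (ZMod n → F)) ≤ bwt n b₂ (u₀ - v₀) := by
        rw [bDist, ← hS₂]
        exact Nat.sInf_le ⟨u₀, hu₀, v₀, hv₀, huv₀, rfl⟩
      have h2 := bwt_le_n n b₂ (u₀ - v₀)
      omega
    · -- b₂ < k : Singleton-type bound. Find nonzero codeword vanishing on k-1 positions.
      have hk1 : 1 ≤ k := by omega
      have hCfin : FiniteDimensional F C := inferInstance
      let φ : C →ₗ[F] (Fin (k - 1) → F) :=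
        LinearMap.pi (fun t => (LinearMap.proj (((b₂ + t.1 : ℕ) : ZMod n)) :
          (ZMod n → F) →ₗ[F] F).comp C.subtype)
      have hker : LinearMap.ker φ ≠ ⊥ := by
        apply LinearMap.ker_ne_bot_of_finrank_lt
        rw [hk, Module.finrank_fintype_fun_eq_card, Fintype.card_fin]
        omega
      obtain ⟨⟨x, hxC⟩, hxker, hxne⟩ := (Submodule.ne_bot_iff _).1 hker
      have hx0 : x ≠ 0 := by
        intro h
        apply hxne
        exact Subtype.ext h
      have hvanish : ∀ t : Fin (k - 1), x ((b₂ + t.1 : ℕ) : ZMod n) = 0 := by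
        intro t
        have := LinearMap.mem_ker.1 hxker
        exact congrFun this t
      -- count
      set B : Finset (ZMod n) := (Finset.Ico b₂ k).image (Nat.cast : ℕ → ZMod n) with hB
      have hBcard : B.card = k - b₂ := by
        rw [hB, Finset.card_image_of_injOn, Nat.card_Ico]
        intro m₁ hm₁ m₂ hm₂ h
        simp only [Finset.mem_coe, Finset.mem_Ico] at hm₁ hm₂
        have e₁ := ZMod.val_cast_of_lt (show m₁ < n by omega)
        have e₂ := ZMod.val_cast_of_lt (show m₂ < n by omega)
        rw [← e₁, ← e₂, h]
      have hsub : (Finset.univ.filter (fun i : ZMod n => ∃ j < b₂, x (i + (j : ZMod n)) ≠ 0))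
          ⊆ Finset.univ \ B := by
        intro i hi
        rw [Finset.mem_filter] at hi
        obtain ⟨_, j, hj, hxj⟩ := hi
        rw [Finset.mem_sdiff]
        refine ⟨Finset.mem_univ _, ?_⟩
        intro hiB
        rw [hB, Finset.mem_image] at hiB
        obtain ⟨m, hm, rfl⟩ := hiB
        rw [Finset.mem_Ico] at hm
        have hcast : (m : ZMod n) + (j : ZMod n) = ((m + j : ℕ) : ZMod n) := by push_cast; ring
        have htlt : m + j - b₂ < k - 1 := by omega
        have heq : b₂ + (m + j - b₂) = m + j := by omega
        have := hvanish ⟨m + j - b₂, htlt⟩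
        rw [heq] at this
        rw [hcast, this] at hxj
        exact hxj rfl
      have hcount : bwt n b₂ x ≤ n - (k - b₂) := by
        calc bwt n b₂ x ≤ (Finset.univ \ B).card := Finset.card_le_card hsub
          _ = n - (k - b₂) := by
            rw [Finset.card_sdiff_of_subset (Finset.subset_univ _), hBcard]
            simp [ZMod.card]
      have hmem : bwt n b₂ x ∈ S₂ := by
        refine ⟨x, hxC, 0, C.zero_mem, hx0, ?_⟩
        rw [sub_zero]
      have h1 : bDist n b₂ (C : Set (ZMod n → F)) ≤ bwt n b₂ x := by
        rw [bDist, ← hS₂]; exact Nat.sInf_le hmem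
      omega
  omega
end

section
/- Let C_1,…,C_M be codes of length n over F_q and A an M × N matrix over F_q of rank M (M ≤ N). Let C = [C_1,…,C_M]·A be the matrix product code. For 1 ≤ i ≤ M let t_i be the minimum Hamming distance of the linear code generated by the first i rows of A. Then the minimum b-symbol distance satisfies d_b(C) ≥ min{t_i · d_b(C_i) : i = 1,…,M}. -/
open scoped Classical
open Finset

instance neZeroMul {a b : ℕ} [NeZero a] [NeZero b] : NeZero (a * b) :=
  ⟨Nat.mul_ne_zero (NeZero.ne a) (NeZero.ne b)⟩

noncomputable def mpVec {F : Type*} [Field F] (n N M : ℕ) [NeZero n] [NeZero N]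
    (A : Matrix (Fin M) (Fin N) F) (c : Fin M → ZMod n → F) : ZMod (n * N) → F :=
  fun k => ∑ ℓ : Fin M, c ℓ ((k.val % n : ℕ) : ZMod n) *
    A ℓ ⟨k.val / n, Nat.div_lt_of_lt_mul (ZMod.val_lt k)⟩

def mpCode {F : Type*} [Field F] (n N M : ℕ) [NeZero n] [NeZero N]
    (A : Matrix (Fin M) (Fin N) F) (C : Fin M → Set (ZMod n → F)) :
    Set (ZMod (n * N) → F) :=
  {v | ∃ c : Fin M → ZMod n → F, (∀ ℓ, c ℓ ∈ C ℓ) ∧ v = mpVec n N M A c}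

noncomputable def minHamming {F : Type*} [Field F] {N : ℕ} (S : Set (Fin N → F)) : ℕ :=
  sInf {w | ∃ v ∈ S, v ≠ 0 ∧ hammingNorm v = w}

def NSC {F : Type*} [Field F] {M N : ℕ} (A : Matrix (Fin M) (Fin N) F) : Prop :=
  ∀ t : ℕ, 0 < t → ∀ htM : t ≤ M, ∀ g : Fin t → Fin N, StrictMono g →
    (Matrix.of (fun r c : Fin t => A (Fin.castLE htM r) (g c))).det ≠ 0

lemma rowsIndep {F : Type*} [Field F] {M N : ℕ} (A : Matrix (Fin M) (Fin N) F)
    (hA : A.rank = M) {e : Fin M → F} (he : Matrix.vecMul e A = 0) : e = 0 := by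
  have h1 : Module.finrank F (LinearMap.range A.vecMulLinear) = M := by
    rw [← Matrix.mulVecLin_transpose]
    have h2 : A.transpose.rank = M := by rw [Matrix.rank_transpose, hA]
    exact h2
  have h2 := LinearMap.finrank_range_add_finrank_ker A.vecMulLinear
  rw [h1, Module.finrank_fin_fun] at h2
  have h3 : LinearMap.ker A.vecMulLinear = ⊥ := by
    apply Submodule.finrank_eq_zero.mp
    omega
  have h4 : e ∈ LinearMap.ker A.vecMulLinear := by
    rw [LinearMap.mem_ker, Matrix.vecMulLinear_apply]
    exact he
  rw [h3, Submodule.mem_bot] at h4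
  exact h4

lemma valHelper {n N : ℕ} [NeZero n] [NeZero N] (j : Fin N) {s : ℕ} (hs : s < n) :
    ((j.val * n + s : ℕ) : ZMod (n * N)).val = j.val * n + s := by
  apply ZMod.val_cast_of_lt
  calc j.val * n + s < (j.val + 1) * n := by nlinarith
    _ ≤ N * n := Nat.mul_le_mul_right _ j.isLt
    _ = n * N := Nat.mul_comm _ _

lemma rhoSpec {n N : ℕ} [NeZero n] [NeZero N] (k : ZMod (n * N)) :
    ((k.val % n : ℕ) : ZMod n) = ZMod.castHom (dvd_mul_right n N) (ZMod n) k := by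
  rw [ZMod.natCast_mod, ZMod.natCast_val, ZMod.castHom_apply]

lemma mpVec_sub {F : Type*} [Field F] {n N M : ℕ} [NeZero n] [NeZero N]
    (A : Matrix (Fin M) (Fin N) F) (c c' : Fin M → ZMod n → F) :
    mpVec n N M A c - mpVec n N M A c' = mpVec n N M A (c - c') := by
  funext k
  simp [mpVec, sub_mul, Finset.sum_sub_distrib]

lemma mainBound {F : Type*} [Field F] {n N M b : ℕ} [NeZero n] [NeZero N]
    (hb1 : 1 ≤ b) (hbn : b ≤ n)
    (A : Matrix (Fin M) (Fin N) F) (hA : A.rank = M)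
    (C : Fin M → Set (ZMod n → F))
    (d : Fin M → ZMod n → F) (hd : d ≠ 0)
    (hdC : ∀ ℓ, ∃ u ∈ C ℓ, ∃ v ∈ C ℓ, d ℓ = u - v) :
    ∃ i : Fin M,
      minHamming ((Submodule.span F {v | ∃ ℓ : Fin M, ℓ ≤ i ∧ v = A ℓ} :
            Submodule F (Fin N → F)) : Set (Fin N → F)) * bDist n b (C i)
        ≤ bwt (n * N) b (mpVec n N M A d) := by
  have hn : 0 < n := Nat.pos_of_ne_zero (NeZero.ne n)
  -- choose maximal i with d i ≠ 0
  obtain ⟨i, hdi, hmax⟩ : ∃ i, d i ≠ 0 ∧ ∀ ℓ, i < ℓ → d ℓ = 0 := by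
    have hS : (Finset.univ.filter (fun ℓ => d ℓ ≠ 0)).Nonempty := by
      obtain ⟨ℓ, hℓ⟩ := Function.ne_iff.mp hd
      exact ⟨ℓ, Finset.mem_filter.mpr ⟨Finset.mem_univ _, hℓ⟩⟩
    refine ⟨_, (Finset.mem_filter.mp ((Finset.univ.filter (fun ℓ => d ℓ ≠ 0)).max'_mem hS)).2,
      fun ℓ hℓ => ?_⟩
    by_contra h
    exact absurd (Finset.le_max' _ ℓ (Finset.mem_filter.mpr ⟨Finset.mem_univ _, h⟩))
      (not_le.mpr hℓ)
  refine ⟨i, ?_⟩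
  set ti := minHamming ((Submodule.span F {v | ∃ ℓ : Fin M, ℓ ≤ i ∧ v = A ℓ} :
            Submodule F (Fin N → F)) : Set (Fin N → F)) with hti
  obtain ⟨u, hu, v, hv, hduv⟩ := hdC i
  have huv : u ≠ v := fun h => hdi (by rw [hduv, h, sub_self])
  have hbD : bDist n b (C i) ≤ bwt n b (d i) :=
    Nat.sInf_le ⟨u, hu, v, hv, huv, by rw [← hduv]⟩
  have key : ti * bwt n b (d i) ≤ bwt (n * N) b (mpVec n N M A d) := by
    set x := mpVec n N M A d with hx
    set R := Finset.univ.filter (fun r : ZMod n => ∃ j < b, d i (r + (j : ZMod n)) ≠ 0) with hR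
    set Big := Finset.univ.filter
      (fun k : ZMod (n * N) => ∃ j < b, x (k + (j : ZMod (n * N))) ≠ 0) with hBig
    have hRcard : bwt n b (d i) = R.card := rfl
    have hBigcard : bwt (n * N) b x = Big.card := rfl
    set P : ZMod n → Prop := fun r => ∃ t, t < b ∧ d i (r + (t : ZMod n)) ≠ 0 with hP
    set tf : ZMod n → ℕ := fun r => if h : P r then h.choose else 0 with htf
    have htfspec : ∀ r ∈ R, tf r < b ∧ d i (r + (tf r : ZMod n)) ≠ 0 := by
      intro r hr
      have hPr : P r := (Finset.mem_filter.mp hr).2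
      have : tf r = hPr.choose := by rw [htf]; exact dif_pos hPr
      rw [this]
      exact hPr.choose_spec
    set e : ZMod n → Fin M → F := fun r ℓ => d ℓ (r + (tf r : ZMod n)) with he
    set W : ZMod n → Fin N → F := fun r => Matrix.vecMul (e r) A with hW
    set ρ : ZMod (n * N) → ZMod n := fun k => ZMod.castHom (dvd_mul_right n N) (ZMod n) k
      with hρ
    -- key pointwise evaluation
    have hxval : ∀ r : ZMod n, ∀ j : Fin N,
        x (((j.val * n + (r + (tf r : ZMod n)).val : ℕ) : ZMod (n * N))) = W r j := by
      intro r j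
      set s := (r + (tf r : ZMod n)).val with hs
      have hsn : s < n := ZMod.val_lt _
      set p : ZMod (n * N) := ((j.val * n + s : ℕ) : ZMod (n * N)) with hp
      have hval : p.val = j.val * n + s := valHelper j hsn
      have h1 : ((p.val % n : ℕ) : ZMod n) = r + (tf r : ZMod n) := by
        rw [hval, Nat.mul_comm j.val n, Nat.mul_add_mod, Nat.mod_eq_of_lt hsn, hs,
          ZMod.natCast_val, ZMod.cast_id]
      have h2 : p.val / n = j.val := by
        rw [hval, Nat.mul_comm j.val n, Nat.mul_add_div hn, Nat.div_eq_of_lt hsn, Nat.add_zero]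
      have hfin : (⟨p.val / n, Nat.div_lt_of_lt_mul (ZMod.val_lt p)⟩ : Fin N) = j :=
        Fin.ext h2
      show mpVec n N M A d p = W r j
      unfold mpVec
      rw [h1, hfin]
      simp [hW, he, Matrix.vecMul, dotProduct]
    -- per-row injection into Big
    have hrow : ∀ r ∈ R, ti ≤ (Big.filter (fun k => ρ k = r)).card := by
      intro r hr
      obtain ⟨htb, htd⟩ := htfspec r hr
      have hW0 : W r ≠ 0 := by
        intro h0
        have := rowsIndep A hA h0
        exact htd (by simpa [he] using congrFun this i)
      have hWspan : W r ∈ (Submodule.span F {v | ∃ ℓ : Fin M, ℓ ≤ i ∧ v = A ℓ} :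
          Submodule F (Fin N → F)) := by
        have hWsum : W r = ∑ ℓ : Fin M, e r ℓ • A ℓ := by
          funext j
          simp [hW, Matrix.vecMul, dotProduct]
        rw [hWsum]
        apply Submodule.sum_mem
        intro ℓ _
        by_cases hℓ : ℓ ≤ i
        · exact Submodule.smul_mem _ _ (Submodule.subset_span ⟨ℓ, hℓ, rfl⟩)
        · have : e r ℓ = 0 := by simp [he, hmax ℓ (not_le.mp hℓ)]
          rw [this, zero_smul]
          exact Submodule.zero_mem _
      have hti2 : ti ≤ hammingNorm (W r) := Nat.sInf_le ⟨W r, hWspan, hW0, rfl⟩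
      refine hti2.trans ?_
      rw [hammingNorm]
      set φ : Fin N → ZMod (n * N) := fun j =>
        ((j.val * n + (r + (tf r : ZMod n)).val : ℕ) : ZMod (n * N)) - (tf r : ZMod (n * N))
        with hφ
      apply Finset.card_le_card_of_injOn φ
      · intro j hj
        have hWj : W r j ≠ 0 := by simpa using hj
        have hsn : (r + (tf r : ZMod n)).val < n := ZMod.val_lt _
        refine Finset.mem_filter.mpr ⟨Finset.mem_filter.mpr ⟨Finset.mem_univ _, ?_⟩, ?_⟩
        · refine ⟨tf r, htb, ?_⟩
          rw [hφ]
          simp only []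
          rw [sub_add_cancel]
          rw [hxval r j]
          exact hWj
        · -- ρ (φ j) = r
          rw [hφ]
          simp only []
          have hhom : ∀ a b' : ZMod (n * N), ρ (a - b') = ρ a - ρ b' := by
            intro a b'
            exact map_sub (ZMod.castHom (dvd_mul_right n N) (ZMod n)) a b'
          rw [hhom]
          have h1 : ρ (((j.val * n + (r + (tf r : ZMod n)).val : ℕ) : ZMod (n * N)))
              = r + (tf r : ZMod n) := by
            rw [hρ]
            simp only [map_natCast]
            push_cast
            rw [ZMod.natCast_self]
            simp [ZMod.natCast_val, ZMod.cast_id]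
          have h2 : ρ ((tf r : ℕ) : ZMod (n * N)) = (tf r : ZMod n) := by
            rw [hρ]; simp [map_natCast]
          rw [h1, h2]
          ring
      · intro j1 hj1 j2 hj2 hphi
        have hs1 : (r + (tf r : ZMod n)).val < n := ZMod.val_lt _
        have heq : ((j1.val * n + (r + (tf r : ZMod n)).val : ℕ) : ZMod (n * N))
            = ((j2.val * n + (r + (tf r : ZMod n)).val : ℕ) : ZMod (n * N)) := by
          have := congrArg (fun z => z + (tf r : ZMod (n * N))) hphi
          simpa [hφ, sub_add_cancel] using this
        have := congrArg ZMod.val heq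
        rw [valHelper j1 hs1, valHelper j2 hs1] at this
        have : j1.val = j2.val := by
          have hn' : n ≠ 0 := NeZero.ne n
          nlinarith [Nat.eq_of_mul_eq_mul_right hn (by omega : j1.val * n = j2.val * n)]
        exact Fin.ext this
    -- disjoint fibers
    have hdisj : ∀ r1 ∈ R, ∀ r2 ∈ R, r1 ≠ r2 →
        Disjoint (Big.filter (fun k => ρ k = r1)) (Big.filter (fun k => ρ k = r2)) := by
      intro r1 _ r2 _ hne
      rw [Finset.disjoint_left]
      intro k hk1 hk2
      exact hne ((Finset.mem_filter.mp hk1).2 ▸ (Finset.mem_filter.mp hk2).2 ▸ rfl)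
    calc ti * bwt n b (d i) = ∑ _r ∈ R, ti := by
          rw [Finset.sum_const, smul_eq_mul, hRcard, Nat.mul_comm]
      _ ≤ ∑ r ∈ R, (Big.filter (fun k => ρ k = r)).card := Finset.sum_le_sum hrow
      _ = (R.biUnion (fun r => Big.filter (fun k => ρ k = r))).card :=
          (Finset.card_biUnion hdisj).symm
      _ ≤ Big.card := Finset.card_le_card
          (Finset.biUnion_subset.mpr fun r _ => Finset.filter_subset _ _)
      _ = bwt (n * N) b x := hBigcard.symm
  calc ti * bDist n b (C i) ≤ ti * bwt n b (d i) := Nat.mul_le_mul_left _ hbD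
    _ ≤ bwt (n * N) b (mpVec n N M A d) := key

/-- `d_b([C_1,…,C_M]·A) ≥ min{t_i · d_b(C_i)}` where `t_i` is the
minimum Hamming distance of the code spanned by the first `i` rows of `A`. -/
theorem stmt5 {F : Type*} [Field F] {n N M b : ℕ} [NeZero n] [NeZero N]
    (hMN : M ≤ N) (hb1 : 1 ≤ b) (hbn : b ≤ n)
    (A : Matrix (Fin M) (Fin N) F) (hA : A.rank = M)
    (C : Fin M → Set (ZMod n → F)) (hC : ∀ ℓ, (C ℓ).Nonempty) :
    sInf {w | ∃ i : Fin M,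
        w = minHamming ((Submodule.span F {v | ∃ ℓ : Fin M, ℓ ≤ i ∧ v = A ℓ} :
              Submodule F (Fin N → F)) : Set (Fin N → F)) * bDist n b (C i)}
      ≤ bDist (n * N) b (mpCode n N M A C) := by
  have hn : 0 < n := Nat.pos_of_ne_zero (NeZero.ne n)
  have hbd : bDist (n * N) b (mpCode n N M A C) =
      sInf {w | ∃ u ∈ mpCode n N M A C, ∃ v ∈ mpCode n N M A C,
        u ≠ v ∧ bwt (n * N) b (u - v) = w} := rfl
  by_cases hTne : {w | ∃ u ∈ mpCode n N M A C, ∃ v ∈ mpCode n N M A C,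
      u ≠ v ∧ bwt (n * N) b (u - v) = w}.Nonempty
  · obtain ⟨u, hu, v, hv, huv, hw⟩ := Nat.sInf_mem hTne
    obtain ⟨c, hc, rfl⟩ := hu
    obtain ⟨c', hc', rfl⟩ := hv
    have hd : (c - c') ≠ 0 := by
      intro h0
      apply huv
      have hcc : c = c' := by
        funext ℓ
        have := congrFun h0 ℓ
        simpa [sub_eq_zero] using this
      rw [hcc]
    obtain ⟨i, hi⟩ := mainBound hb1 hbn A hA C (c - c') hd
      (fun ℓ => ⟨c ℓ, hc ℓ, c' ℓ, hc' ℓ, rfl⟩)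
    rw [← mpVec_sub] at hi
    refine le_trans (Nat.sInf_le ⟨i, rfl⟩) ?_
    rw [hbd, ← hw]
    exact hi
  · have hTempty : {w | ∃ u ∈ mpCode n N M A C, ∃ v ∈ mpCode n N M A C,
        u ≠ v ∧ bwt (n * N) b (u - v) = w} = ∅ := Set.not_nonempty_iff_eq_empty.mp hTne
    rw [hbd, hTempty, Nat.sInf_empty]
    rcases Nat.eq_zero_or_pos M with hM | hM
    · have hS : {w | ∃ i : Fin M,
          w = minHamming ((Submodule.span F {v | ∃ ℓ : Fin M, ℓ ≤ i ∧ v = A ℓ} :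
                Submodule F (Fin N → F)) : Set (Fin N → F)) * bDist n b (C i)} = ∅ := by
        apply Set.eq_empty_iff_forall_notMem.mpr
        rintro w ⟨i, -⟩
        exact absurd i.isLt (by omega)
      rw [hS, Nat.sInf_empty]
    · set i0 : Fin M := ⟨0, hM⟩ with hi0
      have h0 : bDist n b (C i0) = 0 := by
        by_contra hb0
        have hne : {w | ∃ u ∈ C i0, ∃ v ∈ C i0, u ≠ v ∧ bwt n b (u - v) = w}.Nonempty := by
          rw [Set.nonempty_iff_ne_empty]
          intro h
          apply hb0
          unfold bDist
          rw [h]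
          exact Nat.sInf_empty
        obtain ⟨w0, u0, hu0, v0, hv0, hne0, -⟩ := hne
        choose cc hcc using hC
        set c1 := Function.update cc i0 u0 with hc1def
        set c2 := Function.update cc i0 v0 with hc2def
        have hc1 : ∀ ℓ, c1 ℓ ∈ C ℓ := by
          intro ℓ
          rcases eq_or_ne ℓ i0 with h | h
          · subst h; simp [hc1def, Function.update_self]; exact hu0
          · simp [hc1def, Function.update_of_ne h]; exact hcc ℓ
        have hc2 : ∀ ℓ, c2 ℓ ∈ C ℓ := by
          intro ℓ
          rcases eq_or_ne ℓ i0 with h | h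
          · subst h; simp [hc2def, Function.update_self]; exact hv0
          · simp [hc2def, Function.update_of_ne h]; exact hcc ℓ
        have hddi0 : (c1 - c2) i0 = u0 - v0 := by
          simp [hc1def, hc2def, Function.update_self]
        obtain ⟨r, hr⟩ := Function.ne_iff.mp (sub_ne_zero.mpr hne0)
        set e : Fin M → F := fun ℓ => (c1 - c2) ℓ r with hedef
        have hei0 : e i0 ≠ 0 := by
          rw [hedef]
          simp only [hddi0]
          exact hr
        have hvm : Matrix.vecMul e A ≠ 0 := by
          intro h
          exact hei0 (congrFun (rowsIndep A hA h) i0)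
        obtain ⟨j, hj⟩ := Function.ne_iff.mp hvm
        -- evaluate mpVec (c1 - c2) at position j*n + r.val
        have heval : mpVec n N M A (c1 - c2) ((j.val * n + r.val : ℕ) : ZMod (n * N))
            = Matrix.vecMul e A j := by
          set p : ZMod (n * N) := ((j.val * n + r.val : ℕ) : ZMod (n * N)) with hp
          have hrn : r.val < n := ZMod.val_lt r
          have hval : p.val = j.val * n + r.val := valHelper j hrn
          have h1 : ((p.val % n : ℕ) : ZMod n) = r := by
            rw [hval, Nat.mul_comm j.val n, Nat.mul_add_mod, Nat.mod_eq_of_lt hrn,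
              ZMod.natCast_val, ZMod.cast_id]
          have h2 : p.val / n = j.val := by
            rw [hval, Nat.mul_comm j.val n, Nat.mul_add_div hn, Nat.div_eq_of_lt hrn,
              Nat.add_zero]
          have hfin : (⟨p.val / n, Nat.div_lt_of_lt_mul (ZMod.val_lt p)⟩ : Fin N) = j :=
            Fin.ext h2
          show mpVec n N M A (c1 - c2) p = _
          unfold mpVec
          rw [h1, hfin]
          simp [hedef, Matrix.vecMul, dotProduct]
        have hneq : mpVec n N M A c1 ≠ mpVec n N M A c2 := by
          intro h
          have hz : mpVec n N M A (c1 - c2) = 0 := by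
            rw [← mpVec_sub, h, sub_self]
          rw [congrFun hz _] at heval
          exact hj heval.symm
        have : bwt (n * N) b (mpVec n N M A c1 - mpVec n N M A c2) ∈
            {w | ∃ u ∈ mpCode n N M A C, ∃ v ∈ mpCode n N M A C,
              u ≠ v ∧ bwt (n * N) b (u - v) = w} :=
          ⟨mpVec n N M A c1, ⟨c1, hc1, rfl⟩, mpVec n N M A c2, ⟨c2, hc2, rfl⟩, hneq, rfl⟩
        rw [hTempty] at this
        exact this
      refine Nat.sInf_le ⟨i0, ?_⟩
      rw [h0, Nat.mul_zero]
end

section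
/- Let A = (a_{i,j}) be an M × N upper triangular NSC matrix over F_q (so a_{i,j} = 0 for i > j), and C = [C_1,…,C_M]·A. Then d_b(C) ≤ min{ N·d_b(C_1), (N − i + 1)·d_b(C_i) + b − 1 for i = 2,…,M }. -/
open scoped Classical
open Finset

/-!
Fix `i`, a pair `u ≠ v` in `C i` realising `d_b(C i)`, and two codewords of the matrix-product
code whose component vectors differ only at `i`. Their difference is `(u - v) ⊗ (row i of A)`.
By triangularity the blocks before block `i` vanish, and block `i` is `(u - v) · a_{ii}` with
`a_{ii} ≠ 0` (otherwise the leading `(i+1)`-minor has a zero row), so the difference is nonzero.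
A `b`-window meeting its support either starts in blocks `i, …, N - 1`, and then projects to a
`b`-window of `u - v` (each at most `N - i` times), or starts among the `b - 1` positions just
before block `i`, of which there are none when `i = 0`.
-/
section Windows

variable {F : Type*} [Field F]

noncomputable def windowStarts (n b : ℕ) [NeZero n] (x : ZMod n → F) : Finset (ZMod n) :=
  univ.filter fun i => ∃ j < b, x (i + j) ≠ 0

lemma bwt_eq_card_windowStarts {n b : ℕ} [NeZero n] (x : ZMod n → F) :
    bwt n b x = (windowStarts n b x).card :=
  rfl

lemma card_windowStarts_filter_val_lt_le {m b t : ℕ} [NeZero m] {x : ZMod m → F}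
    (hx : ∀ k, x k ≠ 0 → t ≤ k.val) :
    ((windowStarts m b x).filter fun k => k.val < t).card ≤ min (b - 1) t := by
  have hsub : ((windowStarts m b x).filter fun k => k.val < t).card ≤
      (Ico (t - (b - 1)) t).card := by
    refine card_le_card_of_injOn ZMod.val (fun k hk => ?_)
      (fun k₁ _ k₂ _ h => ZMod.val_injective m h)
    simp only [windowStarts, coe_filter, mem_filter, mem_univ, true_and, Set.mem_ofPred_eq] at hk
    obtain ⟨⟨j, hj, hne⟩, hlt⟩ := hk
    have hshift : (k + j).val ≤ k.val + j := (ZMod.val_add_le _ _).trans <| by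
      rw [ZMod.val_natCast]; exact Nat.add_le_add_left (Nat.mod_le _ _) _
    have := hx _ hne
    rw [coe_Ico, Set.mem_Ico]
    omega
  rw [Nat.card_Ico] at hsub
  omega

lemma card_windowStarts_filter_le_val_le {n N b s : ℕ} [NeZero n] [NeZero N] {w : ZMod n → F}
    {x : ZMod (n * N) → F}
    (hx : ∀ k, x k ≠ 0 → w (ZMod.castHom (dvd_mul_right n N) (ZMod n) k) ≠ 0) :
    ((windowStarts (n * N) b x).filter fun k => s * n ≤ k.val).card ≤ (N - s) * bwt n b w := by
  set π := ZMod.castHom (dvd_mul_right n N) (ZMod n)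
  have hπ : ∀ k, (π k).val = k.val % n := fun k => by
    rw [ZMod.castHom_apply, ← ZMod.natCast_val, ZMod.val_natCast]
  rw [bwt_eq_card_windowStarts, Nat.mul_comm (N - s), ← Nat.card_Ico s N, ← card_product]
  refine card_le_card_of_injOn (fun k => (π k, k.val / n)) (fun k hk => ?_)
    (fun k₁ _ k₂ _ h => ?_)
  · simp only [windowStarts, coe_filter, mem_filter, mem_univ, true_and, Set.mem_ofPred_eq] at hk
    obtain ⟨⟨j, hj, hne⟩, hle⟩ := hk
    simp only [windowStarts, coe_product, coe_filter, coe_Ico, Set.mem_prod, Set.mem_ofPred_eq,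
      mem_univ, true_and, Set.mem_Ico]
    refine ⟨⟨j, hj, by simpa [map_add, map_natCast] using hx _ hne⟩,
      (Nat.le_div_iff_mul_le (Nat.pos_of_neZero n)).2 hle, Nat.div_lt_of_lt_mul (ZMod.val_lt k)⟩
  · obtain ⟨hmod, hdiv⟩ := Prod.ext_iff.1 h
    apply ZMod.val_injective
    rw [← Nat.div_add_mod k₁.val n, ← Nat.div_add_mod k₂.val n, ← hπ, ← hπ]
    exact congrArg₂ (n * · + ZMod.val ·) hdiv hmod

lemma bwt_le_of_support {n N b s : ℕ} [NeZero n] [NeZero N] {w : ZMod n → F}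
    {x : ZMod (n * N) → F}
    (hx : ∀ k, x k ≠ 0 →
      w (ZMod.castHom (dvd_mul_right n N) (ZMod n) k) ≠ 0 ∧ s * n ≤ k.val) :
    bwt (n * N) b x ≤ (N - s) * bwt n b w + min (b - 1) (s * n) := by
  rw [bwt_eq_card_windowStarts,
    ← card_filter_add_card_filter_not (s := windowStarts (n * N) b x)
      (p := fun k => s * n ≤ k.val)]
  simp only [not_le]
  exact Nat.add_le_add (card_windowStarts_filter_le_val_le fun k hk => (hx k hk).1)
    (card_windowStarts_filter_val_lt_le fun k hk => (hx k hk).2)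

end Windows

lemma NSC.apply_castLE_ne_zero {F : Type*} [Field F] {M N : ℕ} {A : Matrix (Fin M) (Fin N) F}
    (hA : NSC A) (htri : ∀ (i : Fin M) (j : Fin N), j.val < i.val → A i j = 0) (hMN : M ≤ N)
    (i : Fin M) : A i (Fin.castLE hMN i) ≠ 0 := by
  intro hzero
  have hiM : i.val + 1 ≤ M := i.isLt
  refine hA (i.val + 1) i.val.succ_pos hiM (Fin.castLE (hiM.trans hMN)) (Fin.strictMono_castLE _)
    (Matrix.det_eq_zero_of_row_eq_zero (Fin.last i.val) fun j => ?_)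
  have hrow : Fin.castLE hiM (Fin.last i.val) = i := Fin.ext rfl
  rw [Matrix.of_apply, hrow]
  rcases Nat.lt_succ_iff_lt_or_eq.1 j.isLt with hj | hj
  · exact htri i _ hj
  · rwa [show Fin.castLE (hiM.trans hMN) j = Fin.castLE hMN i from Fin.ext hj]

section MatrixProductCode

variable {F : Type*} [Field F]

lemma bDist_le_bwt_sub {m b : ℕ} [NeZero m] {C : Set (ZMod m → F)} {u v : ZMod m → F}
    (hu : u ∈ C) (hv : v ∈ C) (huv : u ≠ v) : bDist m b C ≤ bwt m b (u - v) :=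
  Nat.sInf_le ⟨u, hu, v, hv, huv, rfl⟩

lemma exists_bwt_sub_eq_bDist {m b : ℕ} [NeZero m] {C : Set (ZMod m → F)}
    (hC : ∃ u ∈ C, ∃ v ∈ C, u ≠ v) :
    ∃ u ∈ C, ∃ v ∈ C, u ≠ v ∧ bwt m b (u - v) = bDist m b C := by
  obtain ⟨u, hu, v, hv, huv⟩ := hC
  exact Nat.sInf_mem (s := {w | ∃ u ∈ C, ∃ v ∈ C, u ≠ v ∧ bwt m b (u - v) = w})
    ⟨_, u, hu, v, hv, huv, rfl⟩

variable {n N M : ℕ} [NeZero n] [NeZero N]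

lemma mpVec_update_sub_update_apply (A : Matrix (Fin M) (Fin N) F) (c : Fin M → ZMod n → F)
    (i : Fin M) (u v : ZMod n → F) (k : ZMod (n * N)) :
    (mpVec n N M A (Function.update c i u) - mpVec n N M A (Function.update c i v)) k =
      (u - v) (ZMod.castHom (dvd_mul_right n N) (ZMod n) k) *
        A i ⟨k.val / n, Nat.div_lt_of_lt_mul (ZMod.val_lt k)⟩ := by
  simp only [Pi.sub_apply, mpVec, ← sum_sub_distrib]
  rw [Fintype.sum_eq_single i fun ℓ hℓ => by simp [Function.update_of_ne hℓ]]
  simp [sub_mul, ZMod.natCast_mod, ZMod.natCast_val, ZMod.castHom_apply]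

lemma mpVec_update_ne_update {A : Matrix (Fin M) (Fin N) F} {i : Fin M} (hiN : i.val < N)
    (hdiag : A i ⟨i.val, hiN⟩ ≠ 0) (c : Fin M → ZMod n → F) {u v : ZMod n → F}
    (huv : u ≠ v) :
    mpVec n N M A (Function.update c i u) ≠ mpVec n N M A (Function.update c i v) := by
  obtain ⟨r, hr⟩ := Function.ne_iff.1 huv
  have hn : 0 < n := Nat.pos_of_neZero n
  -- position `r` of block `i`, where the difference is `(u - v) r * A i i`
  set k : ZMod (n * N) := ((i.val * n + r.val : ℕ) : ZMod (n * N))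
  have hk : k.val = i.val * n + r.val := ZMod.val_cast_of_lt <| calc
    i.val * n + r.val < (i.val + 1) * n := by rw [add_one_mul]; exact Nat.add_lt_add_left r.val_lt _
    _ ≤ N * n := Nat.mul_le_mul_right n hiN
    _ = n * N := Nat.mul_comm N n
  have hπk : ZMod.castHom (dvd_mul_right n N) (ZMod n) k = r := by
    rw [map_natCast, Nat.cast_add, Nat.cast_mul, ZMod.natCast_self, mul_zero, zero_add,
      ZMod.natCast_zmod_val]
  have hblock :
      (⟨k.val / n, Nat.div_lt_of_lt_mul (ZMod.val_lt k)⟩ : Fin N) = ⟨i.val, hiN⟩ := by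
    simp only [Fin.mk.injEq, hk]
    rw [add_comm, Nat.add_mul_div_right _ _ hn, Nat.div_eq_of_lt r.val_lt, zero_add]
  intro h
  have hzero := congrFun (sub_eq_zero.2 h) k
  rw [mpVec_update_sub_update_apply, hπk, hblock] at hzero
  exact mul_ne_zero (sub_ne_zero.2 hr) hdiag hzero

lemma bDist_mpCode_le (hMN : M ≤ N) {A : Matrix (Fin M) (Fin N) F} (hA : NSC A)
    (htri : ∀ (i : Fin M) (j : Fin N), j.val < i.val → A i j = 0)
    {C : Fin M → Set (ZMod n → F)} (hC : ∀ ℓ, ∃ u ∈ C ℓ, ∃ v ∈ C ℓ, u ≠ v)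
    (b : ℕ) (i : Fin M) :
    bDist (n * N) b (mpCode n N M A C) ≤
      (N - i.val) * bDist n b (C i) + min (b - 1) (i.val * n) := by
  obtain ⟨u, hu, v, hv, huv, hmin⟩ := exists_bwt_sub_eq_bDist (b := b) (hC i)
  choose c hc using fun ℓ => (hC ℓ).imp fun _ h => h.1
  have hmem : ∀ w ∈ C i, mpVec n N M A (Function.update c i w) ∈ mpCode n N M A C :=
    fun w hw => ⟨_, Function.forall_update_iff c (p := fun ℓ z => z ∈ C ℓ) |>.2
      ⟨hw, fun ℓ _ => hc ℓ⟩, rfl⟩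
  have hsupp : ∀ k, (mpVec n N M A (Function.update c i u) -
      mpVec n N M A (Function.update c i v)) k ≠ 0 →
      (u - v) (ZMod.castHom (dvd_mul_right n N) (ZMod n) k) ≠ 0 ∧ i.val * n ≤ k.val := by
    intro k hk
    rw [mpVec_update_sub_update_apply] at hk
    refine ⟨left_ne_zero_of_mul hk, not_lt.1 fun hlt => right_ne_zero_of_mul hk ?_⟩
    exact htri i _ ((Nat.div_lt_iff_lt_mul (Nat.pos_of_neZero n)).2 hlt)
  have hne := mpVec_update_ne_update (i := i) (lt_of_lt_of_le i.isLt hMN)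
    (hA.apply_castLE_ne_zero htri hMN i) c huv
  calc bDist (n * N) b (mpCode n N M A C)
      ≤ bwt (n * N) b (mpVec n N M A (Function.update c i u) -
          mpVec n N M A (Function.update c i v)) := bDist_le_bwt_sub (hmem u hu) (hmem v hv) hne
    _ ≤ (N - i.val) * bwt n b (u - v) + min (b - 1) (i.val * n) := bwt_le_of_support hsupp
    _ = (N - i.val) * bDist n b (C i) + min (b - 1) (i.val * n) := by rw [hmin]

end MatrixProductCode

-- Rows are 0-based: the paper's `C_1` is `C 0`, and its `N - i + 1` is `N - i.val`.
theorem stmt9_general {F : Type*} [Field F] {n N M b : ℕ} [NeZero n] [NeZero N] [NeZero M]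
    (hMN : M ≤ N) (hb1 : 1 ≤ b)
    (A : Matrix (Fin M) (Fin N) F) (hA : NSC A)
    (htri : ∀ (i : Fin M) (j : Fin N), j.val < i.val → A i j = 0)
    (C : Fin M → Set (ZMod n → F)) (hC : ∀ ℓ, ∃ u ∈ C ℓ, ∃ v ∈ C ℓ, u ≠ v) :
    bDist (n * N) b (mpCode n N M A C) ≤ N * bDist n b (C 0) ∧
    ∀ i : Fin M, 0 < i.val →
      bDist (n * N) b (mpCode n N M A C) ≤ (N - i.val) * bDist n b (C i) + b - 1 := by
  refine ⟨by simpa using bDist_mpCode_le hMN hA htri hC b 0, fun i _ => ?_⟩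
  have := bDist_mpCode_le hMN hA htri hC b i
  omega

/-- for an upper triangular NSC matrix `A`,
`d_b(C) ≤ min{N·d_b(C_1), (N-i+1)·d_b(C_i) + b - 1 (i = 2,…,M)}`
(0-based: `C_1 = C 0`, and `(N - i + 1)` becomes `N - i.val`). -/
theorem stmt9 {F : Type*} [Field F] {n N M b : ℕ} [NeZero n] [NeZero N] [NeZero M]
    (hMN : M ≤ N) (hb1 : 1 ≤ b) (hbn : b ≤ n)
    (A : Matrix (Fin M) (Fin N) F) (hA : NSC A)
    (htri : ∀ (i : Fin M) (j : Fin N), j.val < i.val → A i j = 0)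
    (C : Fin M → Set (ZMod n → F)) (hC : ∀ ℓ, ∃ u ∈ C ℓ, ∃ v ∈ C ℓ, u ≠ v) :
    bDist (n * N) b (mpCode n N M A C) ≤ N * bDist n b (C 0) ∧
    ∀ i : Fin M, 0 < i.val →
      bDist (n * N) b (mpCode n N M A C) ≤ (N - i.val) * bDist n b (C i) + b - 1 :=
  stmt9_general hMN hb1 A hA htri C hC
end

section
/- Let A be an M × N upper triangular NSC matrix and C = [C_1,…,C_M]·A. Set d* = min{(N−i+1)·d_b(C_i) : i = 1,…,M}. If d* = N·d_b(C_1), then d_b(C) = d*. -/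
open scoped Classical
open Finset

/-! Lay a codeword of `[C_0, …, C_{M-1}]·A` out as `N` blocks of length `n`, block `j` carrying
`∑_ℓ c_ℓ A_{ℓ j}`. Let `x = c - c'` be the difference of two codewords and `i` the last index
with `x_i ≠ 0`. At a position `q` with `x_i(q) ≠ 0`, the vector `(x_ℓ(q))_ℓ` is supported on the
first `i + 1` rows of `A` and is nonzero, so by the NSC property its product with `A` vanishes in
at most `i` columns: at least `N - i` blocks are nonzero at `q`. Hence every nonzero `b`-window
of `x_i` yields `N - i` nonzero `b`-windows of the difference, and
`d_b(C) ≥ min_i (N - i) d_b(C_i)`. Conversely, changing only `c_0` along a pair realising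
`d_b(C_0)` multiplies the difference block by block by the nowhere-zero first row of `A`, giving
`b`-weight exactly `N d_b(C_0)`. -/

open scoped Matrix

namespace MatrixProductCode

variable {n N : ℕ}

def offset : ZMod (n * N) →+* ZMod n := ZMod.castHom (dvd_mul_right n N) (ZMod n)

theorem offset_add_natCast (k : ZMod (n * N)) (j : ℕ) :
    offset (k + (j : ZMod (n * N))) = offset k + j := by
  rw [map_add, map_natCast]

variable [NeZero n]

-- Position `k = j * n + q` of the product code is offset `q` in block `j`.
def pos (j : Fin N) (q : ZMod n) : ZMod (n * N) := ((j.val * n + q.val : ℕ) : ZMod (n * N))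

theorem val_pos (j : Fin N) (q : ZMod n) : (pos j q).val = j.val * n + q.val := by
  refine ZMod.val_cast_of_lt ?_
  calc j.val * n + q.val < j.val * n + n := by have := ZMod.val_lt q; omega
    _ = (j.val + 1) * n := by ring
    _ ≤ n * N := by rw [mul_comm n]; exact Nat.mul_le_mul_right n j.isLt

variable [NeZero N]

def block (k : ZMod (n * N)) : Fin N := ⟨k.val / n, Nat.div_lt_of_lt_mul (ZMod.val_lt k)⟩

theorem offset_apply (k : ZMod (n * N)) : offset k = (k.val : ZMod n) := by
  rw [offset, ZMod.castHom_apply, ZMod.cast_eq_val]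

@[simp]
theorem block_pos (j : Fin N) (q : ZMod n) : block (pos j q) = j := by
  ext
  change (pos j q).val / n = j.val
  rw [val_pos, Nat.mul_comm, Nat.mul_add_div (Nat.pos_of_ne_zero (NeZero.ne n)),
    Nat.div_eq_of_lt (ZMod.val_lt q), Nat.add_zero]

@[simp]
theorem offset_pos (j : Fin N) (q : ZMod n) : offset (pos j q) = q := by
  simp [offset_apply, val_pos]

theorem pos_block_offset (k : ZMod (n * N)) : pos (block k) (offset k) = k := by
  rw [pos, offset_apply, ZMod.val_natCast, block, Nat.div_add_mod', ZMod.natCast_zmod_val]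

def blockEquiv : Fin N × ZMod n ≃ ZMod (n * N) where
  toFun p := pos p.1 p.2
  invFun k := (block k, offset k)
  left_inv p := by simp
  right_inv := pos_block_offset

theorem card_filter_offset (P : ZMod n → Prop) [DecidablePred P] :
    (univ.filter fun k : ZMod (n * N) => P (offset k)).card = N * (univ.filter P).card := by
  rw [card_equiv blockEquiv.symm (t := univ ×ˢ univ.filter P) (fun k => by simp [blockEquiv]),
    card_product, card_univ, Fintype.card_fin]

variable {F : Type*} [Field F] {M : ℕ}

theorem mpVec_apply (A : Matrix (Fin M) (Fin N) F) (c : Fin M → ZMod n → F)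
    (k : ZMod (n * N)) : mpVec n N M A c k = ((fun ℓ => c ℓ (offset k)) ᵥ* A) (block k) := by
  simp only [mpVec, Matrix.vecMul, dotProduct, offset_apply, ZMod.natCast_mod]
  rfl

theorem mpVec_pos (A : Matrix (Fin M) (Fin N) F) (c : Fin M → ZMod n → F)
    (j : Fin N) (q : ZMod n) : mpVec n N M A c (pos j q) = ((fun ℓ => c ℓ q) ᵥ* A) j := by
  rw [mpVec_apply, block_pos, offset_pos]

theorem mpVec_sub (A : Matrix (Fin M) (Fin N) F) (c c' : Fin M → ZMod n → F) :
    mpVec n N M A (c - c') = mpVec n N M A c - mpVec n N M A c' := by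
  ext k
  simp only [mpVec_apply, Pi.sub_apply]
  exact congrFun (Matrix.sub_vecMul A _ _) _

theorem mpVec_single (A : Matrix (Fin M) (Fin N) F) (i : Fin M) (y : ZMod n → F)
    (k : ZMod (n * N)) : mpVec n N M A (Pi.single i y) k = y (offset k) * A i (block k) := by
  rw [mpVec_apply]
  have hcol : (fun ℓ => Pi.single (M := fun _ => ZMod n → F) i y ℓ (offset k))
      = Pi.single i (y (offset k)) := by
    funext ℓ
    by_cases h : ℓ = i
    · subst h; simp
    · simp [h]
  rw [hcol, Matrix.single_vecMul, Pi.smul_apply, Matrix.row_apply, smul_eq_mul]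

end MatrixProductCode

namespace NSC

variable {F : Type*} [Field F] {M N : ℕ} {A : Matrix (Fin M) (Fin N) F}

theorem apply_zero_ne_zero [NeZero M] (hA : NSC A) (j : Fin N) : A 0 j ≠ 0 := by
  have h1M : 1 ≤ M := Nat.one_le_iff_ne_zero.2 (NeZero.ne M)
  have hcast : Fin.castLE h1M 0 = 0 := Fin.ext rfl
  simpa [hcast] using hA 1 one_pos h1M (fun _ => j) (Subsingleton.strictMono _)

theorem sub_le_card_vecMul_ne_zero (hA : NSC A) {x : Fin M → F} {i : Fin M} (hi : x i ≠ 0)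
    (hx : ∀ ℓ, i < ℓ → x ℓ = 0) : N - i ≤ (univ.filter fun j => (x ᵥ* A) j ≠ 0).card := by
  by_contra! hlt
  have hZ : i.val + 1 ≤ (univ.filter fun j => (x ᵥ* A) j = 0).card := by
    have := card_filter_add_card_filter_not (s := univ) fun j => (x ᵥ* A) j ≠ 0
    simp only [not_not, card_univ, Fintype.card_fin] at this
    omega
  obtain ⟨Z', hZ'Z, hZ'⟩ := exists_subset_card_eq hZ
  let g := Z'.orderEmbOfFin hZ'
  let r : Fin (i.val + 1) → Fin M := Fin.castLE i.isLt
  have hvec : (x ∘ r) ᵥ* A.submatrix r g = 0 := by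
    funext c
    have hgc : (x ᵥ* A) (g c) = 0 := (mem_filter.1 (hZ'Z (orderEmbOfFin_mem Z' hZ' c))).2
    rw [Pi.zero_apply, ← hgc]
    refine Fintype.sum_of_injective r (Fin.castLE_injective _) _ _ (fun ℓ hℓ => ?_) fun _ => rfl
    rw [hx ℓ ?_, zero_mul]
    by_contra! hle
    exact hℓ ⟨⟨ℓ, Nat.lt_succ_of_le hle⟩, rfl⟩
  have hzero := Matrix.eq_zero_of_vecMul_eq_zero (hA _ i.val.succ_pos i.isLt g g.strictMono) hvec
  exact hi (congrFun hzero (Fin.last i))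

end NSC

theorem exists_max_ne_zero {ι α : Type*} [Fintype ι] [LinearOrder ι] [Zero α] {x : ι → α}
    (hx : x ≠ 0) : ∃ i, x i ≠ 0 ∧ ∀ ℓ, i < ℓ → x ℓ = 0 := by
  obtain ⟨ℓ₀, hℓ₀⟩ := Function.ne_iff.1 hx
  have hne : (univ.filter fun ℓ => x ℓ ≠ 0).Nonempty := ⟨ℓ₀, mem_filter.2 ⟨mem_univ _, hℓ₀⟩⟩
  obtain ⟨i, hi, hmax⟩ := exists_max_image _ id hne
  refine ⟨i, (mem_filter.1 hi).2, fun ℓ hℓ => ?_⟩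
  by_contra h
  exact (hmax ℓ (mem_filter.2 ⟨mem_univ _, h⟩)).not_gt hℓ

section bDist

variable {F : Type*} [Field F] {n b : ℕ} [NeZero n] {C : Set (ZMod n → F)}

theorem bDist_le_bwt {u v : ZMod n → F} (hu : u ∈ C) (hv : v ∈ C) (huv : u ≠ v) :
    bDist n b C ≤ bwt n b (u - v) :=
  Nat.sInf_le ⟨u, hu, v, hv, huv, rfl⟩

theorem exists_bwt_eq_bDist (hC : ∃ u ∈ C, ∃ v ∈ C, u ≠ v) :
    ∃ u ∈ C, ∃ v ∈ C, u ≠ v ∧ bwt n b (u - v) = bDist n b C := by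
  obtain ⟨u, hu, v, hv, huv⟩ := hC
  exact Nat.sInf_mem (s := {w | ∃ u ∈ C, ∃ v ∈ C, u ≠ v ∧ bwt n b (u - v) = w})
    ⟨_, u, hu, v, hv, huv, rfl⟩

end bDist

namespace MatrixProductCode

variable {F : Type*} [Field F] {n N M b : ℕ} [NeZero n] [NeZero N]

theorem bwt_offset_mul_block (y : ZMod n → F) {a : Fin N → F} (ha : ∀ j, a j ≠ 0) :
    bwt (n * N) b (fun k => y (offset k) * a (block k)) = N * bwt n b y := by
  unfold bwt
  simp only [mul_ne_zero_iff, ne_eq, ha, not_false_eq_true, and_true, offset_add_natCast]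
  exact card_filter_offset (N := N) fun q => ∃ j < b, y (q + (j : ZMod n)) ≠ 0

theorem mul_bwt_le_bwt_mpVec {A : Matrix (Fin M) (Fin N) F} (hA : NSC A)
    {x : Fin M → ZMod n → F} {i : Fin M} (hx : ∀ ℓ, i < ℓ → x ℓ = 0) :
    (N - i) * bwt n b (x i) ≤ bwt (n * N) b (mpVec n N M A x) := by
  set W := univ.filter fun p : ZMod n => ∃ j < b, x i (p + (j : ZMod n)) ≠ 0
  set big := univ.filter fun k : ZMod (n * N) =>
    ∃ j < b, mpVec n N M A x (k + (j : ZMod (n * N))) ≠ 0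
  have hfibre : ∀ p ∈ W, N - i ≤ ((big.filter (offset · ∈ W)).filter (offset · = p)).card := by
    intro p hp
    obtain ⟨jp, hjp, hq⟩ := (mem_filter.1 hp).2
    set q := p + (jp : ZMod n)
    calc N - i ≤ (univ.filter fun j => ((fun ℓ => x ℓ q) ᵥ* A) j ≠ 0).card :=
          hA.sub_le_card_vecMul_ne_zero hq fun ℓ hℓ => by simp [hx ℓ hℓ]
      _ ≤ _ := by
        refine card_le_card_of_injOn (fun j => pos j q - (jp : ZMod (n * N))) (fun j hj => ?_) ?_
        · have hoff : offset (pos j q - (jp : ZMod (n * N))) = p := by simp [q]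
          simp only [coe_filter, mem_filter, mem_univ, true_and, Set.mem_ofPred_eq] at hj ⊢
          refine ⟨⟨mem_filter.2 ⟨mem_univ _, jp, hjp, ?_⟩, hoff ▸ hp⟩, hoff⟩
          rwa [sub_add_cancel, mpVec_pos]
        · intro j₁ _ j₂ _ h
          simpa using congrArg block (sub_left_inj.1 h)
  calc (N - i) * W.card ≤ (big.filter (offset · ∈ W)).card :=
        mul_card_image_le_card_of_maps_to (fun k hk => (mem_filter.1 hk).2) _ hfibre
    _ ≤ big.card := card_filter_le _ _

theorem exists_mul_bDist_le_bwt_sub {A : Matrix (Fin M) (Fin N) F} (hA : NSC A)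
    {C : Fin M → Set (ZMod n → F)} {u v : ZMod (n * N) → F} (hu : u ∈ mpCode n N M A C)
    (hv : v ∈ mpCode n N M A C) (huv : u ≠ v) :
    ∃ i : Fin M, (N - i.val) * bDist n b (C i) ≤ bwt (n * N) b (u - v) := by
  obtain ⟨cu, hcu, rfl⟩ := hu
  obtain ⟨cv, hcv, rfl⟩ := hv
  obtain ⟨i, hi, hmax⟩ := exists_max_ne_zero (x := cu - cv) fun h => huv (by rw [sub_eq_zero.1 h])
  refine ⟨i, ?_⟩
  calc (N - i.val) * bDist n b (C i)
      ≤ (N - i.val) * bwt n b (cu i - cv i) :=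
        Nat.mul_le_mul_left _ (bDist_le_bwt (hcu i) (hcv i) (sub_ne_zero.1 hi))
    _ ≤ bwt (n * N) b (mpVec n N M A (cu - cv)) := mul_bwt_le_bwt_mpVec hA hmax
    _ = _ := by rw [mpVec_sub]

theorem exists_bwt_sub_eq_mul_bDist [NeZero M] {A : Matrix (Fin M) (Fin N) F} (hA : NSC A)
    {C : Fin M → Set (ZMod n → F)} (hC : ∀ ℓ, ∃ u ∈ C ℓ, ∃ v ∈ C ℓ, u ≠ v) :
    ∃ u ∈ mpCode n N M A C, ∃ v ∈ mpCode n N M A C,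
      u ≠ v ∧ bwt (n * N) b (u - v) = N * bDist n b (C 0) := by
  obtain ⟨u, hu, v, hv, huv, hbwt⟩ := exists_bwt_eq_bDist (b := b) (hC 0)
  choose c hc using fun ℓ => (hC ℓ).imp fun _ h => h.1
  have hupdate : ∀ w ∈ C 0, ∀ ℓ, Function.update c 0 w ℓ ∈ C ℓ := fun w hw ℓ => by
    rcases eq_or_ne ℓ 0 with rfl | hℓ
    · simpa using hw
    · simpa [hℓ] using hc ℓ
  have hdiff : mpVec n N M A (Function.update c 0 u) - mpVec n N M A (Function.update c 0 v)
      = fun k => (u - v) (offset k) * A 0 (block k) := by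
    rw [← mpVec_sub, ← Function.update_sub, sub_self, ← Pi.single]
    exact funext (mpVec_single A 0 (u - v))
  refine ⟨_, ⟨_, hupdate u hu, rfl⟩, _, ⟨_, hupdate v hv, rfl⟩, fun h => ?_, ?_⟩
  · obtain ⟨p, hp⟩ := Function.ne_iff.1 huv
    have hzero := congrFun (hdiff.symm.trans (sub_eq_zero.2 h)) (pos 0 p)
    simp only [offset_pos, block_pos, Pi.sub_apply, Pi.zero_apply] at hzero
    exact mul_ne_zero (sub_ne_zero.2 hp) (hA.apply_zero_ne_zero 0) hzero
  · rw [hdiff, bwt_offset_mul_block _ hA.apply_zero_ne_zero, hbwt]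

end MatrixProductCode

open MatrixProductCode

theorem stmt10_general {F : Type*} [Field F] {n N M b : ℕ} [NeZero n] [NeZero N] [NeZero M]
    (A : Matrix (Fin M) (Fin N) F) (hA : NSC A)
    (C : Fin M → Set (ZMod n → F)) (hC : ∀ ℓ, ∃ u ∈ C ℓ, ∃ v ∈ C ℓ, u ≠ v)
    (hd : sInf {w | ∃ i : Fin M, w = (N - i.val) * bDist n b (C i)}
            = N * bDist n b (C 0)) :
    bDist (n * N) b (mpCode n N M A C)
      = sInf {w | ∃ i : Fin M, w = (N - i.val) * bDist n b (C i)} := by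
  obtain ⟨u, hu, v, hv, huv, hbwt⟩ := exists_bwt_sub_eq_mul_bDist (b := b) hA hC
  obtain ⟨u', hu', v', hv', huv', hmin⟩ := exists_bwt_eq_bDist ⟨u, hu, v, hv, huv⟩
  obtain ⟨i, hi⟩ := exists_mul_bDist_le_bwt_sub hA hu' hv' huv'
  refine le_antisymm ?_ ?_
  · calc bDist (n * N) b (mpCode n N M A C) ≤ bwt (n * N) b (u - v) := bDist_le_bwt hu hv huv
      _ = _ := hbwt.trans hd.symm
  · calc sInf {w | ∃ i : Fin M, w = (N - i.val) * bDist n b (C i)}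
        ≤ (N - i.val) * bDist n b (C i) := Nat.sInf_le ⟨i, rfl⟩
      _ ≤ _ := hi
      _ = _ := hmin

/-- for an upper triangular NSC matrix `A`, if
`d* = min{(N-i+1)·d_b(C_i)}` equals `N·d_b(C_1)`, then `d_b(C) = d*`. -/
theorem stmt10 {F : Type*} [Field F] {n N M b : ℕ} [NeZero n] [NeZero N] [NeZero M]
    (hMN : M ≤ N) (hb1 : 1 ≤ b) (hbn : b ≤ n)
    (A : Matrix (Fin M) (Fin N) F) (hA : NSC A)
    (htri : ∀ (i : Fin M) (j : Fin N), j.val < i.val → A i j = 0)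
    (C : Fin M → Set (ZMod n → F)) (hC : ∀ ℓ, ∃ u ∈ C ℓ, ∃ v ∈ C ℓ, u ≠ v)
    (hd : sInf {w | ∃ i : Fin M, w = (N - i.val) * bDist n b (C i)}
            = N * bDist n b (C 0)) :
    bDist (n * N) b (mpCode n N M A C)
      = sInf {w | ∃ i : Fin M, w = (N - i.val) * bDist n b (C i)} :=
  stmt10_general A hA C hC hd
end

section
/- For m ≥ 1 and 0 ≤ r < q−1, there exists a nonzero codeword c ∈ RM_q(r,m) such that w_1(c) = d_1(RM_q(r,m)) = (q−r)·q^{m−1} and the Hamming support of c is a set of consecutive coordinates (a successive subset of Z_{q^m}) not containing coordinate 1, unless the support is all of Z_{q^m}. -/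
open scoped Classical
open Finset

instance neZeroCardPow {F : Type*} [Field F] [Fintype F] {m : ℕ} :
    NeZero ((Fintype.card F) ^ m) :=
  ⟨pow_ne_zero m Fintype.card_ne_zero⟩

/-- The `k`-th evaluation point `P_{k+1}` of `F^m`, listed in lexicographic order
determined by the enumeration `e` of the field elements (base-`q` digits of `k`,
most significant first). -/
noncomputable def rmPoint {F : Type*} [Field F] [Fintype F]
    (e : Fin (Fintype.card F) ≃ F) (m : ℕ) (k : ZMod ((Fintype.card F) ^ m)) :
    Fin m → F :=
  fun j => e ⟨k.val / (Fintype.card F) ^ (m - 1 - j.val) % Fintype.card F,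
    Nat.mod_lt _ Fintype.card_pos⟩

/-- The generalized Reed–Muller code `RM_q(r, m)`. -/
noncomputable def RMcode {F : Type*} [Field F] [Fintype F]
    (e : Fin (Fintype.card F) ≃ F) (r m : ℕ) :
    Set (ZMod ((Fintype.card F) ^ m) → F) :=
  {v | ∃ f : MvPolynomial (Fin m) F, f.totalDegree ≤ r ∧
    v = fun k => MvPolynomial.eval (rmPoint e m k) f}

/-- A subset of `Z_n` consisting of cyclically consecutive indices. -/
def SuccessiveSet {n : ℕ} [NeZero n] (J : Finset (ZMod n)) : Prop :=
  ∃ (a : ZMod n) (h : ℕ),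
    J = Finset.image (fun t : ℕ => a + (t : ZMod n)) (Finset.range h)



lemma dlz {F : Type*} [Field F] [Fintype F] :
    ∀ (m : ℕ) (f : MvPolynomial (Fin m) F), f ≠ 0 →
    (Finset.univ.filter (fun p : Fin m → F => MvPolynomial.eval p f = 0)).card * Fintype.card F
      ≤ f.totalDegree * (Fintype.card F) ^ m := by
  intro m
  induction m with
  | zero =>
    intro f hf
    obtain ⟨a, rfl⟩ := MvPolynomial.C_surjective (Fin 0) f
    have ha : a ≠ 0 := fun h => hf (by simp [h])
    simp [MvPolynomial.eval_C, ha]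
  | succ m ih =>
    intro f hf
    set q := Fintype.card F with hq
    have hq0 : 0 < q := Fintype.card_pos
    set g := MvPolynomial.finSuccEquiv F m f with hgdef
    have hg0 : g ≠ 0 := fun h => hf (by
      have := (MvPolynomial.finSuccEquiv F m).injective (h.trans (map_zero _).symm)
      exact this)
    set k := g.natDegree with hk
    set c := g.leadingCoeff with hc
    have hck : c ≠ 0 := Polynomial.leadingCoeff_ne_zero.mpr hg0
    have hdeg : c.totalDegree + k ≤ f.totalDegree :=
      MvPolynomial.totalDegree_coeff_finSuccEquiv_add_le f k hck
    -- counting decomposition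
    have key : (Finset.univ.filter (fun p : Fin (m+1) → F => MvPolynomial.eval p f = 0)).card
        = ∑ y : Fin m → F,
          (Finset.univ.filter (fun x : F => MvPolynomial.eval (Fin.cons x y) f = 0)).card := by
      rw [Finset.card_eq_sum_card_fiberwise
        (f := fun p : Fin (m+1) → F => (fun i : Fin m => p i.succ))
        (t := Finset.univ) (fun _ _ => Finset.mem_univ _)]
      refine Finset.sum_congr rfl fun y _ => ?_
      refine Finset.card_nbij' (fun p => p 0) (fun x => Fin.cons x y) ?_ ?_ ?_ ?_
      · intro p hp
        simp only [Finset.mem_coe, Finset.mem_filter, Finset.mem_univ, true_and] at hp ⊢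
        have h2 : (fun i : Fin m => p i.succ) = y := hp.2
        have : Fin.cons (p 0) y = p := by
          rw [← h2]; exact Fin.cons_self_tail p
        rw [this]; exact hp.1
      · intro x hx
        simp only [Finset.mem_coe, Finset.mem_filter, Finset.mem_univ, true_and] at hx ⊢
        refine ⟨hx, ?_⟩
        funext i; simp
      · intro p hp
        simp only [Finset.mem_coe, Finset.mem_filter, Finset.mem_univ, true_and] at hp
        have h2 : (fun i : Fin m => p i.succ) = y := hp.2
        rw [← h2]; exact Fin.cons_self_tail p
      · intro x hx; simp
    -- per-fiber bounds
    have hbound : ∀ y : Fin m → F,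
        (Finset.univ.filter (fun x : F => MvPolynomial.eval (Fin.cons x y) f = 0)).card
          ≤ if MvPolynomial.eval y c = 0 then q else k := by
      intro y
      by_cases hy : MvPolynomial.eval y c = 0
      · simp only [hy, if_true]
        calc _ ≤ (Finset.univ : Finset F).card := Finset.card_filter_le _ _
        _ = q := Finset.card_univ
      · simp only [hy, if_false]
        set py := g.map (MvPolynomial.eval y) with hpy
        have hpy0 : py ≠ 0 := fun h => hy (by
          have := congrArg (fun p => Polynomial.coeff p k) h
          exact (by simpa [hpy, Polynomial.coeff_map] using this : MvPolynomial.eval y (g.coeff k) = 0))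
        have hevr : ∀ x : F, MvPolynomial.eval (Fin.cons x y) f = py.eval x := fun x =>
          MvPolynomial.eval_eq_eval_mv_eval' y x f
        have hsub : (Finset.univ.filter (fun x : F => MvPolynomial.eval (Fin.cons x y) f = 0))
            ⊆ py.roots.toFinset := by
          intro x hxx
          simp only [Finset.mem_filter, Finset.mem_univ, true_and] at hxx
          rw [Multiset.mem_toFinset, Polynomial.mem_roots']
          exact ⟨hpy0, by rw [Polynomial.IsRoot, ← hevr x]; exact hxx⟩
        calc _ ≤ py.roots.toFinset.card := Finset.card_le_card hsub
          _ ≤ Multiset.card py.roots := Multiset.toFinset_card_le _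
          _ ≤ py.natDegree := Polynomial.card_roots' py
          _ ≤ k := Polynomial.natDegree_map_le
    -- bad set bound via ih
    set B := (Finset.univ.filter (fun y : Fin m → F => MvPolynomial.eval y c = 0)) with hB
    have hBcard : B.card * q ≤ c.totalDegree * q ^ m := ih c hck
    have hsum : ∑ y : Fin m → F,
        (Finset.univ.filter (fun x : F => MvPolynomial.eval (Fin.cons x y) f = 0)).card
        ≤ B.card * q + q ^ m * k := by
      calc ∑ y : Fin m → F, _ ≤ ∑ y : Fin m → F, (if MvPolynomial.eval y c = 0 then q else k) :=
            Finset.sum_le_sum (fun y _ => hbound y)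
        _ = B.card * q + (Finset.univ.filter (fun y : Fin m → F => ¬ MvPolynomial.eval y c = 0)).card * k := by
            rw [Finset.sum_ite, Finset.sum_const, Finset.sum_const, smul_eq_mul, smul_eq_mul, hB]
        _ ≤ B.card * q + q ^ m * k := by
            gcongr
            calc (Finset.univ.filter (fun y : Fin m → F => ¬ MvPolynomial.eval y c = 0)).card
                ≤ (Finset.univ : Finset (Fin m → F)).card := Finset.card_filter_le _ _
              _ = q ^ m := by simp [Fintype.card_fun, hq]
    calc (Finset.univ.filter (fun p : Fin (m+1) → F => MvPolynomial.eval p f = 0)).card * q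
        ≤ (B.card * q + q ^ m * k) * q := by rw [key]; exact Nat.mul_le_mul_right _ hsum
      _ = B.card * q * q + k * q ^ (m+1) := by ring
      _ ≤ c.totalDegree * q ^ m * q + k * q ^ (m+1) := by gcongr
      _ = (c.totalDegree + k) * q ^ (m+1) := by ring
      _ ≤ f.totalDegree * q ^ (m+1) := Nat.mul_le_mul_right _ hdeg


lemma digits_inj {q : ℕ} (hq : 0 < q) :
    ∀ (m a b : ℕ), a < q ^ m → b < q ^ m →
      (∀ i < m, a / q ^ i % q = b / q ^ i % q) → a = b := by
  intro m
  induction m with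
  | zero =>
    intro a b ha hb _
    simp only [pow_zero, Nat.lt_one_iff] at ha hb
    omega
  | succ m ih =>
    intro a b ha hb h
    have h0 := h 0 (Nat.succ_pos m)
    simp only [pow_zero, Nat.div_one] at h0
    have hdiv : a / q = b / q := by
      refine ih (a / q) (b / q) ?_ ?_ ?_
      · rw [Nat.div_lt_iff_lt_mul hq]; rw [pow_succ] at ha; exact ha
      · rw [Nat.div_lt_iff_lt_mul hq]; rw [pow_succ] at hb; exact hb
      · intro i hi
        have := h (i + 1) (by omega)
        simpa [Nat.div_div_eq_div_mul, pow_succ, Nat.mul_comm] using this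
    rw [← Nat.div_add_mod a q, ← Nat.div_add_mod b q, hdiv, h0]
lemma rmPoint_inj {F : Type*} [Field F] [Fintype F]
    (e : Fin (Fintype.card F) ≃ F) (m : ℕ) :
    Function.Injective (rmPoint e m) := by
  intro k k' h
  have hq : 0 < Fintype.card F := Fintype.card_pos
  apply ZMod.val_injective
  refine digits_inj hq m _ _ (ZMod.val_lt k) (ZMod.val_lt k') ?_
  intro i hi
  have hj := congrFun h ⟨m - 1 - i, by omega⟩
  have hmj : m - 1 - (m - 1 - i) = i := by omega
  simp only [rmPoint, hmj] at hj
  exact Fin.mk.injEq _ _ _ _ ▸ (e.injective hj)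

lemma bwt_one_eq {F : Type*} [Field F] {n : ℕ} [NeZero n] (x : ZMod n → F) :
    bwt n 1 x = (hSupp x).card := by
  unfold bwt hSupp
  congr 1
  apply Finset.filter_congr
  intro i _
  constructor
  · rintro ⟨j, hj, hx⟩
    have : j = 0 := by omega
    subst this
    simpa using hx
  · intro hx
    exact ⟨0, Nat.zero_lt_one, by simpa using hx⟩

lemma wt_lower {F : Type*} [Field F] [Fintype F]
    (e : Fin (Fintype.card F) ≃ F) (m r : ℕ) (hm : 1 ≤ m)
    (f : MvPolynomial (Fin m) F) (hdeg : f.totalDegree ≤ r)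
    (hne : (fun k : ZMod ((Fintype.card F) ^ m) => MvPolynomial.eval (rmPoint e m k) f) ≠ 0) :
    (Fintype.card F - r) * (Fintype.card F) ^ (m - 1)
      ≤ (hSupp (fun k => MvPolynomial.eval (rmPoint e m k) f)).card := by
  have hq0 : 0 < Fintype.card F := Fintype.card_pos
  have hqm : Fintype.card F ^ (m - 1) * Fintype.card F = Fintype.card F ^ m := by
    rw [← pow_succ]; congr 1; omega
  have hf0 : f ≠ 0 := by rintro rfl; exact hne (by funext k; simp)
  set zZ := (Finset.univ.filter
    (fun k : ZMod (Fintype.card F ^ m) => MvPolynomial.eval (rmPoint e m k) f = 0)) with hzZ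
  set zP := (Finset.univ.filter (fun p : Fin m → F => MvPolynomial.eval p f = 0)) with hzP
  have h1 : zZ.card ≤ zP.card := by
    apply Finset.card_le_card_of_injOn (rmPoint e m)
    · intro k hk
      simp only [hzZ, Finset.mem_coe, Finset.mem_filter, Finset.mem_univ, true_and] at hk
      simp only [hzP, Finset.mem_coe, Finset.mem_filter, Finset.mem_univ, true_and]
      exact hk
    · exact (rmPoint_inj e m).injOn
  have h2 : zP.card * Fintype.card F ≤ r * (Fintype.card F ^ (m - 1) * Fintype.card F) := by
    rw [hqm]
    exact (dlz m f hf0).trans (Nat.mul_le_mul_right _ hdeg)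
  have h2' : zP.card ≤ r * Fintype.card F ^ (m - 1) := by
    rw [← Nat.mul_assoc] at h2
    exact Nat.le_of_mul_le_mul_right h2 hq0
  have hpart : zZ.card
      + (hSupp (fun k : ZMod (Fintype.card F ^ m) => MvPolynomial.eval (rmPoint e m k) f)).card
      = Fintype.card F ^ m := by
    rw [hzZ]
    unfold hSupp
    rw [Finset.card_filter_add_card_filter_not]
    simp [ZMod.card]
  by_cases hrq : Fintype.card F ≤ r
  · rw [Nat.sub_eq_zero_of_le hrq, Nat.zero_mul]
    exact Nat.zero_le _
  · push_neg at hrq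
    have hsum : r * Fintype.card F ^ (m - 1) + (Fintype.card F - r) * Fintype.card F ^ (m - 1)
        = Fintype.card F ^ m := by
      rw [← Nat.add_mul, Nat.add_sub_cancel' (le_of_lt hrq), Nat.mul_comm, hqm]
    omega

/-- for `m ≥ 1` and `0 ≤ r < q-1`, there is a nonzero codeword of
`RM_q(r,m)` of minimum Hamming weight `(q-r)q^{m-1}` whose support is a set of
consecutive coordinates not containing the first coordinate (index `0`),
unless the support is everything. -/
theorem stmt12 {F : Type*} [Field F] [Fintype F]
    (e : Fin (Fintype.card F) ≃ F) (he : e ⟨0, Fintype.card_pos⟩ = 0)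
    (m r : ℕ) (hm : 1 ≤ m) (hr : r < Fintype.card F - 1) :
    ∃ c ∈ RMcode e r m, c ≠ 0 ∧
      bwt ((Fintype.card F) ^ m) 1 c
        = (Fintype.card F - r) * (Fintype.card F) ^ (m - 1) ∧
      bDist ((Fintype.card F) ^ m) 1 (RMcode e r m)
        = (Fintype.card F - r) * (Fintype.card F) ^ (m - 1) ∧
      SuccessiveSet (hSupp c) ∧
      (hSupp c ≠ Finset.univ → (0 : ZMod ((Fintype.card F) ^ m)) ∉ hSupp c) := by
  have hq0 : 0 < Fintype.card F := Fintype.card_pos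
  have hrq : r + 2 ≤ Fintype.card F := by omega
  have hrle : r ≤ Fintype.card F := by omega
  have hqm : Fintype.card F ^ (m - 1) * Fintype.card F = Fintype.card F ^ m := by
    rw [← pow_succ]; congr 1; omega
  have hp0 : 0 < Fintype.card F ^ (m - 1) := pow_pos hq0 _
  set i0 : Fin m := ⟨0, hm⟩ with hi0
  set f : MvPolynomial (Fin m) F :=
    ∏ j : Fin r, (MvPolynomial.X i0 - MvPolynomial.C (e (Fin.castLE hrle j))) with hf
  have h1 : ∀ j : Fin r,
      (MvPolynomial.X i0 - MvPolynomial.C (e (Fin.castLE hrle j))).totalDegree ≤ 1 := by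
    intro j
    refine (MvPolynomial.totalDegree_sub _ _).trans ?_
    rw [MvPolynomial.totalDegree_X, MvPolynomial.totalDegree_C]
    omega
  have hfdeg : f.totalDegree ≤ r := by
    rw [hf]
    refine (MvPolynomial.totalDegree_finset_prod _ _).trans ?_
    refine (Finset.sum_le_sum (fun j _ => h1 j)).trans ?_
    simp
  set c : ZMod (Fintype.card F ^ m) → F :=
    fun k => MvPolynomial.eval (rmPoint e m k) f with hc
  have hceval : ∀ k, c k = ∏ j : Fin r,
      (rmPoint e m k i0 - e (Fin.castLE hrle j)) := by
    intro k
    show MvPolynomial.eval (rmPoint e m k) f = _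
    rw [hf, map_prod]
    refine Finset.prod_congr rfl fun j _ => ?_
    rw [map_sub, MvPolynomial.eval_X, MvPolynomial.eval_C]
  -- the first digit
  have hdlt : ∀ k : ZMod (Fintype.card F ^ m),
      k.val / Fintype.card F ^ (m - 1) < Fintype.card F := by
    intro k
    rw [Nat.div_lt_iff_lt_mul hp0, Nat.mul_comm, hqm]
    exact ZMod.val_lt k
  have hdig : ∀ k : ZMod (Fintype.card F ^ m),
      rmPoint e m k i0 = e ⟨k.val / Fintype.card F ^ (m - 1), hdlt k⟩ := by
    intro k
    unfold rmPoint
    congr 1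
    ext
    simp only [hi0]
    rw [Nat.sub_zero]
    exact Nat.mod_eq_of_lt (hdlt k)
  have hsupp_iff : ∀ k : ZMod (Fintype.card F ^ m),
      c k ≠ 0 ↔ r * Fintype.card F ^ (m - 1) ≤ k.val := by
    intro k
    rw [hceval k, Finset.prod_ne_zero_iff]
    constructor
    · intro h
      rw [← Nat.le_div_iff_mul_le hp0]
      by_contra hlt
      push_neg at hlt
      have := h ⟨_, hlt⟩ (Finset.mem_univ _)
      apply this
      rw [sub_eq_zero, hdig k]
      congr 1
    · intro h j _
      rw [sub_ne_zero, hdig k]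
      intro heq
      have := e.injective heq
      have hval : k.val / Fintype.card F ^ (m - 1) = (j : ℕ) := by
        simpa using congrArg Fin.val this
      rw [← Nat.le_div_iff_mul_le hp0] at h
      have := j.isLt
      omega
  -- support description
  set a0 : ZMod (Fintype.card F ^ m) := ((r * Fintype.card F ^ (m - 1) : ℕ) : ZMod (Fintype.card F ^ m)) with ha0
  set L : ℕ := (Fintype.card F - r) * Fintype.card F ^ (m - 1) with hL
  have hsumL : r * Fintype.card F ^ (m - 1) + L = Fintype.card F ^ m := by
    rw [hL, ← Nat.add_mul, Nat.add_sub_cancel' (by omega), Nat.mul_comm, hqm]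
  have hLpos : 0 < L := by
    rw [hL]
    exact Nat.mul_pos (by omega) hp0
  have hval_add : ∀ t < L, ((r * Fintype.card F ^ (m - 1) + t : ℕ) :
      ZMod (Fintype.card F ^ m)).val = r * Fintype.card F ^ (m - 1) + t := by
    intro t ht
    exact ZMod.val_cast_of_lt (by omega)
  have hsupp_eq : hSupp c = Finset.image
      (fun t : ℕ => a0 + (t : ZMod (Fintype.card F ^ m))) (Finset.range L) := by
    ext k
    simp only [hSupp, Finset.mem_filter, Finset.mem_univ, true_and, Finset.mem_image,
      Finset.mem_range]
    rw [hsupp_iff k]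
    constructor
    · intro hk
      refine ⟨k.val - r * Fintype.card F ^ (m - 1), by have := ZMod.val_lt k; omega, ?_⟩
      rw [ha0, ← Nat.cast_add]
      have : r * Fintype.card F ^ (m - 1) + (k.val - r * Fintype.card F ^ (m - 1)) = k.val := by
        omega
      rw [this]
      exact ZMod.natCast_rightInverse k
    · rintro ⟨t, ht, rfl⟩
      rw [ha0, ← Nat.cast_add, hval_add t ht]
      omega
  have hinj : Set.InjOn (fun t : ℕ => a0 + (t : ZMod (Fintype.card F ^ m)))
      (Finset.range L) := by
    intro t1 h1 t2 h2 hteq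
    simp only [Finset.coe_range, Set.mem_Iio] at h1 h2
    have : ((r * Fintype.card F ^ (m - 1) + t1 : ℕ) : ZMod (Fintype.card F ^ m))
        = ((r * Fintype.card F ^ (m - 1) + t2 : ℕ) : _) := by
      rw [Nat.cast_add, Nat.cast_add, ← ha0] at *
      exact hteq
    have := congrArg ZMod.val this
    rw [hval_add t1 h1, hval_add t2 h2] at this
    omega
  have hcard : (hSupp c).card = L := by
    rw [hsupp_eq, Finset.card_image_of_injOn hinj, Finset.card_range]
  have hbwt : bwt ((Fintype.card F) ^ m) 1 c = L := by rw [bwt_one_eq, hcard]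
  have hcmem : c ∈ RMcode e r m := ⟨f, hfdeg, rfl⟩
  have hcne : c ≠ 0 := by
    intro h0
    have ha0mem : a0 ∈ hSupp c := by
      rw [hsupp_eq]
      exact Finset.mem_image.mpr ⟨0, Finset.mem_range.mpr hLpos, by simp⟩
    rw [h0] at ha0mem
    simp [hSupp] at ha0mem
  refine ⟨c, hcmem, hcne, hbwt, ?_, ⟨a0, L, hsupp_eq⟩, ?_⟩
  · -- bDist
    unfold bDist
    have hmem : L ∈ {w | ∃ u ∈ RMcode e r m, ∃ v ∈ RMcode e r m, u ≠ v ∧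
        bwt (Fintype.card F ^ m) 1 (u - v) = w} := by
      refine ⟨c, hcmem, 0, ⟨0, by simp, by funext k; simp⟩, hcne, ?_⟩
      rw [sub_zero, hbwt]
    have hlb : ∀ w ∈ {w | ∃ u ∈ RMcode e r m, ∃ v ∈ RMcode e r m, u ≠ v ∧
        bwt (Fintype.card F ^ m) 1 (u - v) = w}, L ≤ w := by
      rintro w ⟨u, ⟨fu, hfu, rfl⟩, v, ⟨fv, hfv, rfl⟩, huv, rfl⟩
      have hsub : ((fun k => MvPolynomial.eval (rmPoint e m k) fu)
          - fun k => MvPolynomial.eval (rmPoint e m k) fv)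
          = fun k : ZMod (Fintype.card F ^ m) =>
            MvPolynomial.eval (rmPoint e m k) (fu - fv) := by
        funext k
        simp [map_sub]
      rw [hsub, bwt_one_eq, hL]
      refine wt_lower e m r hm (fu - fv) ?_ ?_
      · exact (MvPolynomial.totalDegree_sub fu fv).trans (by omega)
      · rw [← hsub]
        exact sub_ne_zero_of_ne huv
    exact le_antisymm (Nat.sInf_le hmem) (le_csInf ⟨L, hmem⟩ hlb)
  · -- 0 not in support unless support = univ
    intro hne h0
    apply hne
    simp only [hSupp, Finset.mem_filter, Finset.mem_univ, true_and] at h0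
    rw [hsupp_iff] at h0
    rw [ZMod.val_zero] at h0
    have hr0 : r = 0 := by
      by_contra hr0
      have : 0 < r * Fintype.card F ^ (m - 1) := Nat.mul_pos (by omega) hp0
      omega
    rw [Finset.eq_univ_iff_forall]
    intro k
    simp only [hSupp, Finset.mem_filter, Finset.mem_univ, true_and]
    rw [hsupp_iff, hr0]
    simp
end
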